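/- arXiv:2310.14250 — 6 statements merged into one kernel-verified Lean document; each statement's English description precedes it below -/
import Mathlib

section
/- Let p > 1 with Hölder conjugate p' = p/(p−1). There exists a constant c₃ > 0, depending only on p, b₁, b₂, b₃, with the following property: for every finite-dimensional real inner product space E and every bijection G : E → E satisfying (G2) and (G3), the inverse map satisfies ‖G^{-1}(η)‖ ≤ c₃(1 + ‖η‖^{p'−1}) for all η ∈ E. -/
open scoped RealInnerProductSpace

lemma aux_inv_growth (p b₁ b₂ : ℝ) (hp : 1 < p) (hb₁ : 0 < b₁) (hb₂ : 0 ≤ b₂) :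
    ∃ c₃ > (0 : ℝ), ∀ t s : ℝ, 0 ≤ t → 0 ≤ s →
      b₁ * t ^ p - b₂ ≤ s * t → t ≤ c₃ * (1 + s ^ (1 / (p - 1))) := by
  have hp1 : (0:ℝ) < p - 1 := by linarith
  set r : ℝ := 1 / (p - 1) with hrdef
  have hr : 0 < r := by positivity
  refine ⟨1 + (2 * (b₂ + 1) / b₁) ^ r, by positivity, ?_⟩
  intro t s ht hs hineq
  have hsr : 0 ≤ s ^ r := Real.rpow_nonneg hs r
  have hC : 0 ≤ (2 * (b₂ + 1) / b₁) ^ r := Real.rpow_nonneg (by positivity) r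
  by_cases ht1 : t ≤ 1
  · nlinarith
  · push_neg at ht1
    have ht0 : 0 < t := by linarith
    -- b₁ * t^p ≤ (b₂ + s) * t
    have h1 : b₁ * t ^ p ≤ (b₂ + s) * t := by
      have : b₂ ≤ b₂ * t := le_mul_of_one_le_right hb₂ ht1.le
      nlinarith
    have htp : t ^ p = t ^ (p - 1) * t := by
      rw [show p = p - 1 + 1 by ring, Real.rpow_add ht0, Real.rpow_one]
      ring_nf
    have h2 : b₁ * t ^ (p - 1) ≤ b₂ + s := by
      have := h1
      rw [htp] at this
      have := le_of_mul_le_mul_right (by linarith : b₁ * t ^ (p - 1) * t ≤ (b₂ + s) * t) ht0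
      linarith
    have h3 : t ^ (p - 1) ≤ (b₂ + s) / b₁ := by
      rw [le_div_iff₀ hb₁]
      linarith
    have h4 : t ≤ ((b₂ + s) / b₁) ^ r := by
      have := Real.rpow_le_rpow (Real.rpow_nonneg ht0.le _) h3 hr.le
      rwa [← Real.rpow_mul ht0.le,
        show (p - 1) * r = 1 by rw [hrdef]; field_simp, Real.rpow_one] at this
    have h5 : (b₂ + s) / b₁ ≤ (b₂ + 1) / b₁ * (1 + s) := by
      rw [div_mul_eq_mul_div, div_le_div_iff₀ hb₁ hb₁]
      nlinarith [mul_nonneg hb₁.le (mul_nonneg hb₂ hs)]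
    have h6 : t ≤ ((b₂ + 1) / b₁ * (1 + s)) ^ r :=
      h4.trans (Real.rpow_le_rpow (by positivity) h5 hr.le)
    have h7 : ((b₂ + 1) / b₁ * (1 + s)) ^ r = ((b₂ + 1) / b₁) ^ r * (1 + s) ^ r :=
      Real.mul_rpow (by positivity) (by linarith)
    have h8 : (1 + s) ^ r ≤ 2 ^ r * (1 + s ^ r) := by
      by_cases hs1 : s ≤ 1
      · have : (1 + s) ^ r ≤ 2 ^ r :=
          Real.rpow_le_rpow (by linarith) (by linarith) hr.le
        nlinarith [Real.rpow_nonneg (zero_le_two (α := ℝ)) r]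
      · push_neg at hs1
        have : (1 + s) ^ r ≤ (2 * s) ^ r :=
          Real.rpow_le_rpow (by linarith) (by linarith) hr.le
        rw [Real.mul_rpow zero_le_two hs] at this
        nlinarith [Real.rpow_nonneg (zero_le_two (α := ℝ)) r]
    have h9 : ((b₂ + 1) / b₁) ^ r * (2 ^ r * (1 + s ^ r))
        = (2 * (b₂ + 1) / b₁) ^ r * (1 + s ^ r) := by
      rw [show (2 * (b₂ + 1) / b₁ : ℝ) = 2 * ((b₂ + 1) / b₁) by ring,
        Real.mul_rpow zero_le_two (by positivity)]
      ring
    have hb : 0 ≤ ((b₂ + 1) / b₁) ^ r := Real.rpow_nonneg (by positivity) r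
    calc t ≤ ((b₂ + 1) / b₁) ^ r * (1 + s) ^ r := by rwa [h7] at h6
      _ ≤ ((b₂ + 1) / b₁) ^ r * (2 ^ r * (1 + s ^ r)) := by
          exact mul_le_mul_of_nonneg_left h8 hb
      _ = (2 * (b₂ + 1) / b₁) ^ r * (1 + s ^ r) := h9
      _ ≤ (1 + (2 * (b₂ + 1) / b₁) ^ r) * (1 + s ^ r) := by nlinarith

/-- Growth of the inverse operator.  For `p > 1` with conjugate
`p' = p/(p-1)`, there is a constant `c₃ > 0` depending only on `p, b₁, b₂, b₃` such that
for every finite-dimensional real inner product space `E` and every bijection `G : E → E`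
satisfying (G2) and (G3), one has `‖G⁻¹(η)‖ ≤ c₃ (1 + ‖η‖^(p'-1))` for all `η`. -/
theorem inverse_operator_growth
    (p b₁ b₂ b₃ : ℝ) (hp : 1 < p) (hb₁ : 0 < b₁) (hb₂ : 0 ≤ b₂) (hb₃ : 0 < b₃) :
    ∃ c₃ > (0 : ℝ),
      ∀ (E : Type) [NormedAddCommGroup E] [InnerProductSpace ℝ E]
        [FiniteDimensional ℝ E] (G : E → E),
        Function.Bijective G →
        (∀ ξ : E, b₁ * ‖ξ‖ ^ p - b₂ ≤ ⟪G ξ, ξ⟫) →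
        (∀ ξ : E, ‖G ξ‖ ≤ b₃ * (1 + ‖ξ‖ ^ (p - 1))) →
        ∀ η : E, ‖Function.invFun G η‖ ≤ c₃ * (1 + ‖η‖ ^ (p / (p - 1) - 1)) := by
  obtain ⟨c₃, hc₃, hmain⟩ := aux_inv_growth p b₁ b₂ hp hb₁ hb₂
  refine ⟨c₃, hc₃, ?_⟩
  intro E _ _ _ G hbij hG2 _ η
  set ξ := Function.invFun G η with hξ
  have hGξ : G ξ = η := Function.invFun_eq (hbij.surjective η)
  have h1 : b₁ * ‖ξ‖ ^ p - b₂ ≤ ‖η‖ * ‖ξ‖ := by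
    have h := hG2 ξ
    rw [hGξ] at h
    exact h.trans (real_inner_le_norm η ξ)
  have hexp : p / (p - 1) - 1 = 1 / (p - 1) := by
    have h : p - 1 ≠ 0 := ne_of_gt (by linarith)
    field_simp
    ring
  rw [hexp]
  exact hmain ‖ξ‖ ‖η‖ (norm_nonneg ξ) (norm_nonneg η) h1
end

section
/- Let p > 1 with Hölder conjugate p' = p/(p−1). There exist constants c₁ > 0 and c₂ ≥ 0, depending only on p, b₁, b₂, b₃, with the following property: for every finite-dimensional real inner product space E and every bijection G : E → E satisfying (G2) and (G3), the inverse map satisfies ⟪G^{-1}(η), η⟫ ≥ c₁‖η‖^{p'} − c₂ for all η ∈ E. -/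
open scoped RealInnerProductSpace

/-- Coercivity of the inverse operator.  For `p > 1` with conjugate
`p' = p/(p-1)`, there are constants `c₁ > 0` and `c₂ ≥ 0` depending only on
`p, b₁, b₂, b₃` such that for every finite-dimensional real inner product space `E` and
every bijection `G : E → E` satisfying (G2) and (G3), one has
`⟪G⁻¹(η), η⟫ ≥ c₁‖η‖^{p'} - c₂` for all `η`. -/
theorem inverse_operator_coercivity
    (p b₁ b₂ b₃ : ℝ) (hp : 1 < p) (hb₁ : 0 < b₁) (hb₂ : 0 ≤ b₂) (hb₃ : 0 < b₃) :
    ∃ c₁ > (0 : ℝ), ∃ c₂ ≥ (0 : ℝ),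
      ∀ (E : Type) [NormedAddCommGroup E] [InnerProductSpace ℝ E]
        [FiniteDimensional ℝ E] (G : E → E),
        Function.Bijective G →
        (∀ ξ : E, b₁ * ‖ξ‖ ^ p - b₂ ≤ ⟪G ξ, ξ⟫) →
        (∀ ξ : E, ‖G ξ‖ ≤ b₃ * (1 + ‖ξ‖ ^ (p - 1))) →
        ∀ η : E, c₁ * ‖η‖ ^ (p / (p - 1)) - c₂ ≤ ⟪Function.invFun G η, η⟫ := by
  have hp1 : (0:ℝ) < p - 1 := by linarith
  set q := p / (p - 1) with hq
  have hq0 : 0 < q := by positivity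
  have hpq : (p - 1) * q = p := by rw [hq]; field_simp
  refine ⟨b₁ / (2 * b₃) ^ q, by positivity, b₁ + b₂, by linarith, ?_⟩
  intro E _ _ _ G hbij hG2 hG3 η
  set ξ := Function.invFun G η with hξ
  have hGξ : G ξ = η := Function.rightInverse_invFun hbij.surjective η
  have hinner : ⟪G ξ, ξ⟫ = ⟪ξ, η⟫ := by rw [hGξ, real_inner_comm]
  have hx0 : (0:ℝ) ≤ ‖ξ‖ := norm_nonneg _
  have hn0 : (0:ℝ) ≤ ‖η‖ := norm_nonneg _
  have hxp0 : (0:ℝ) ≤ ‖ξ‖ ^ p := Real.rpow_nonneg hx0 p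
  have hkey : (‖η‖ / (2 * b₃)) ^ q - 1 ≤ ‖ξ‖ ^ p := by
    rcases le_or_gt ‖η‖ (2 * b₃) with h | h
    · have h1 : (‖η‖ / (2 * b₃)) ^ q ≤ 1 := by
        apply Real.rpow_le_one (by positivity) _ hq0.le
        rw [div_le_one (by positivity)]; exact h
      linarith
    · have h3 := hG3 ξ
      rw [hGξ] at h3
      have hX0 : (0:ℝ) ≤ ‖ξ‖ ^ (p - 1) := Real.rpow_nonneg hx0 _
      have hx : ‖η‖ / (2 * b₃) ≤ ‖ξ‖ ^ (p - 1) := by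
        rw [div_le_iff₀ (by positivity)]
        nlinarith
      have h2 := Real.rpow_le_rpow (by positivity) hx hq0.le
      rw [← Real.rpow_mul hx0, hpq] at h2
      linarith
  have h2 := hG2 ξ
  rw [hinner] at h2
  have hdiv : b₁ / (2 * b₃) ^ q * ‖η‖ ^ q = b₁ * (‖η‖ / (2 * b₃)) ^ q := by
    rw [Real.div_rpow hn0 (by positivity)]; ring
  have : b₁ * ((‖η‖ / (2 * b₃)) ^ q - 1) ≤ b₁ * ‖ξ‖ ^ p :=
    mul_le_mul_of_nonneg_left hkey hb₁.le
  rw [hq] at hdiv ⊢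
  nlinarith [hdiv]
end

section
/- Let p > 1 with Hölder conjugate p' = p/(p−1). There exists a constant c₄ > 0, depending only on p, b₁, b₂, b₃, with the following property: for every finite-dimensional real inner product space E and every convex, everywhere differentiable function φ : E → ℝ with φ(0) = 0 whose gradient G = ∇φ is strictly monotone and satisfies (G2) and (G3), the Legendre conjugate satisfies 0 ≤ φ*(η) ≤ c₄(1 + ‖η‖^{p'}) for all η ∈ E. -/
open scoped RealInnerProductSpace

lemma convexOn_grad_ineq {E : Type} [NormedAddCommGroup E] [InnerProductSpace ℝ E]
    {φ : E → ℝ} (hφ : ConvexOn ℝ Set.univ φ) {f' : E →L[ℝ] ℝ} {x y : E}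
    (hd : HasFDerivAt φ f' x) : φ x + f' (y - x) ≤ φ y := by
  set L : AffineMap ℝ ℝ E := AffineMap.lineMap x y with hL
  have hg : ConvexOn ℝ Set.univ (φ ∘ L) := by
    have := hφ.comp_affineMap L
    simpa using this
  have hline : HasDerivAt (fun t : ℝ => L t) (y - x) 0 := by
    have : HasDerivAt (fun t : ℝ => t • (y - x) + x) ((1 : ℝ) • (y - x)) 0 :=
      ((hasDerivAt_id (0:ℝ)).smul_const (y - x)).add_const x
    simpa [hL, AffineMap.lineMap_apply, vsub_eq_sub, vadd_eq_add] using this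
  have hg' : HasDerivAt (φ ∘ L) (f' (y - x)) 0 := by
    have hx0 : L (0:ℝ) = x := by simp [hL]
    exact (hx0 ▸ hd : HasFDerivAt φ f' (L 0)).comp_hasDerivAt 0 hline
  have := hg.le_slope_of_hasDerivAt (Set.mem_univ (0:ℝ)) (Set.mem_univ (1:ℝ)) zero_lt_one hg'
  have hs : slope (φ ∘ L) 0 1 = φ y - φ x := by
    simp [slope, hL, Function.comp]
  rw [hs] at this
  linarith

lemma young_sub_bound {p q c : ℝ} (hp : 1 < p) (hq : q = p / (p - 1)) (hc : 0 < c) :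
    ∃ K > (0 : ℝ), ∀ A t : ℝ, 0 ≤ A → 0 ≤ t → A * t - c * t ^ p ≤ K * A ^ q := by
  have hpq : p.HolderConjugate q := (Real.holderConjugate_iff_eq_conjExponent hp).mpr hq
  have hp0 : (0 : ℝ) < p := hpq.pos
  have hq0 : (0 : ℝ) < q := hpq.symm.pos
  have hpc : (0 : ℝ) < p * c := by positivity
  set lam : ℝ := (p * c) ^ p⁻¹ with hlam
  have hlam0 : 0 < lam := Real.rpow_pos_of_pos hpc _
  have hlamp : lam ^ p = p * c := by
    rw [hlam, ← Real.rpow_mul hpc.le, inv_mul_cancel₀ hp0.ne', Real.rpow_one]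
  refine ⟨(q * lam ^ q)⁻¹, by positivity, ?_⟩
  intro A t hA ht
  have hy := Real.young_inequality_of_nonneg (mul_nonneg hlam0.le ht)
    (div_nonneg hA hlam0.le) hpq
  have h1 : lam * t * (A / lam) = A * t := by
    field_simp
  have h2 : (lam * t) ^ p / p = c * t ^ p := by
    rw [Real.mul_rpow hlam0.le ht, hlamp]
    field_simp
  have h3 : (A / lam) ^ q / q = (q * lam ^ q)⁻¹ * A ^ q := by
    rw [Real.div_rpow hA hlam0.le, div_div, inv_mul_eq_div, mul_comm]
  rw [h1, h2, h3] at hy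
  linarith

/-- Bounds on the Legendre conjugate.  For `p > 1` with conjugate
`p' = p/(p-1)`, there is a constant `c₄ > 0` depending only on `p, b₁, b₂, b₃` such that
for every finite-dimensional real inner product space `E` and every convex, everywhere
differentiable `φ : E → ℝ` with `φ(0) = 0` whose gradient `G` is strictly monotone and
satisfies (G2) and (G3), one has `0 ≤ φ*(η) ≤ c₄ (1 + ‖η‖^{p'})` for all `η`
(the supremum defining `φ*(η)` is nonnegative and bounded above by `c₄(1 + ‖η‖^{p'})`). -/
theorem legendre_conjugate_bounds
    (p b₁ b₂ b₃ : ℝ) (hp : 1 < p) (hb₁ : 0 < b₁) (hb₂ : 0 ≤ b₂) (hb₃ : 0 < b₃) :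
    ∃ c₄ > (0 : ℝ),
      ∀ (E : Type) [NormedAddCommGroup E] [InnerProductSpace ℝ E]
        [FiniteDimensional ℝ E] (φ : E → ℝ) (G : E → E),
        φ 0 = 0 →
        ConvexOn ℝ Set.univ φ →
        (∀ ξ : E, HasFDerivAt φ (innerSL ℝ (G ξ)) ξ) →
        (∀ ξ₁ ξ₂ : E, ξ₁ ≠ ξ₂ → 0 < ⟪G ξ₁ - G ξ₂, ξ₁ - ξ₂⟫) →
        (∀ ξ : E, b₁ * ‖ξ‖ ^ p - b₂ ≤ ⟪G ξ, ξ⟫) →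
        (∀ ξ : E, ‖G ξ‖ ≤ b₃ * (1 + ‖ξ‖ ^ (p - 1))) →
        ∀ η : E,
          (∃ ξ : E, (0 : ℝ) ≤ ⟪η, ξ⟫ - φ ξ) ∧
          (∀ ξ : E, ⟪η, ξ⟫ - φ ξ ≤ c₄ * (1 + ‖η‖ ^ (p / (p - 1)))) := by
  set q : ℝ := p / (p - 1) with hqdef
  have hp0 : (0 : ℝ) < p := lt_trans one_pos hp
  have hq1 : 1 < q := by
    rw [hqdef, lt_div_iff₀ (by linarith)]
    linarith
  have hq0 : (0 : ℝ) < q := lt_trans one_pos hq1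
  have h2p : (0 : ℝ) < (2 : ℝ) ^ p := Real.rpow_pos_of_pos two_pos p
  set c : ℝ := b₁ / (2 : ℝ) ^ p with hcdef
  have hc : 0 < c := by positivity
  obtain ⟨K, hK0, hKey⟩ := young_sub_bound hp hqdef hc
  clear_value q c
  refine ⟨K * (1 + b₃ * 2⁻¹) ^ q * 2 ^ q + b₂, by positivity, ?_⟩
  intro E _ _ _ φ G hφ0 hconv hderiv _ hG2 hG3 η
  constructor
  · exact ⟨0, by simp [hφ0]⟩
  · intro ξ
    set x : E := (2⁻¹ : ℝ) • ξ with hxdef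
    clear_value x
    have hsub : ξ - x = x := by rw [hxdef]; module
    have hnx : ‖x‖ = 2⁻¹ * ‖ξ‖ := by
      rw [hxdef, norm_smul]; norm_num
    -- step 1
    have h1 : φ x + ⟪G x, x⟫ ≤ φ ξ := by
      have := convexOn_grad_ineq hconv (hderiv x) (y := ξ)
      simpa [hsub] using this
    -- step 2
    have hG0 : ‖G 0‖ ≤ b₃ := by
      have := hG3 0
      rw [norm_zero, Real.zero_rpow (by intro h; linarith [sub_eq_zero.mp h] : p - 1 ≠ 0)] at this
      simpa using this
    have h2 : -(b₃ * ‖x‖) ≤ φ x := by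
      have hgr := convexOn_grad_ineq hconv (hderiv 0) (y := x)
      have hin : -(b₃ * ‖x‖) ≤ ⟪G 0, x⟫ := by
        have habs := abs_real_inner_le_norm (G 0) x
        have : ‖G 0‖ * ‖x‖ ≤ b₃ * ‖x‖ :=
          mul_le_mul_of_nonneg_right hG0 (norm_nonneg x)
        have := neg_abs_le ⟪G 0, x⟫
        nlinarith [abs_nonneg ⟪G 0, x⟫]
      simp only [sub_zero, hφ0, zero_add] at hgr
      calc -(b₃ * ‖x‖) ≤ ⟪G 0, x⟫ := hin
        _ ≤ φ x := by simpa using hgr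
    -- step 3: coercivity
    have h3 : b₁ * ‖x‖ ^ p - b₂ ≤ ⟪G x, x⟫ := hG2 x
    have hxp : b₁ * ‖x‖ ^ p = c * ‖ξ‖ ^ p := by
      rw [hnx, Real.mul_rpow (by norm_num) (norm_nonneg ξ), hcdef,
        Real.inv_rpow (by norm_num)]
      ring
    -- combine: φ ξ ≥ -(b₃ * 2⁻¹ * ‖ξ‖) + c * ‖ξ‖^p - b₂
    have hlow : -(b₃ * (2⁻¹ * ‖ξ‖)) + c * ‖ξ‖ ^ p - b₂ ≤ φ ξ := by
      rw [← hxp]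
      rw [hnx] at h2
      linarith
    have hinn : ⟪η, ξ⟫ ≤ ‖η‖ * ‖ξ‖ := real_inner_le_norm η ξ
    set A : ℝ := ‖η‖ + b₃ * 2⁻¹ with hAdef
    clear_value A
    have hA0 : 0 ≤ A := by rw [hAdef]; positivity
    have hABt : ⟪η, ξ⟫ - φ ξ ≤ A * ‖ξ‖ - c * ‖ξ‖ ^ p + b₂ := by
      have hexp : A * ‖ξ‖ = ‖η‖ * ‖ξ‖ + b₃ * (2⁻¹ * ‖ξ‖) := by rw [hAdef]; ring
      linarith
    have hy := hKey A ‖ξ‖ hA0 (norm_nonneg ξ)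
    -- bound A^q
    have hAle : A ≤ (1 + b₃ * 2⁻¹) * (1 + ‖η‖) := by
      rw [hAdef]; nlinarith [norm_nonneg η, hb₃]
    have hAq : A ^ q ≤ (1 + b₃ * 2⁻¹) ^ q * (1 + ‖η‖) ^ q := by
      rw [← Real.mul_rpow (by positivity) (by positivity)]
      exact Real.rpow_le_rpow hA0 hAle hq0.le
    have hnq : (1 + ‖η‖) ^ q ≤ 2 ^ q * (1 + ‖η‖ ^ q) := by
      rcases le_total ‖η‖ 1 with h | h
      · have h1 : (1 + ‖η‖) ^ q ≤ (2 : ℝ) ^ q :=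
          Real.rpow_le_rpow (by positivity) (by linarith) hq0.le
        have h2 : (2 : ℝ) ^ q ≤ 2 ^ q * (1 + ‖η‖ ^ q) :=
          le_mul_of_one_le_right (Real.rpow_pos_of_pos two_pos q).le
            (by linarith [Real.rpow_nonneg (norm_nonneg η) q])
        linarith
      · have h1 : (1 + ‖η‖) ^ q ≤ (2 * ‖η‖) ^ q :=
          Real.rpow_le_rpow (by positivity) (by linarith) hq0.le
        have h2 : (2 * ‖η‖) ^ q = 2 ^ q * ‖η‖ ^ q :=
          Real.mul_rpow (by norm_num) (norm_nonneg η)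
        have h3 : (0:ℝ) < 2 ^ q := Real.rpow_pos_of_pos two_pos q
        calc (1 + ‖η‖) ^ q ≤ (2 * ‖η‖) ^ q := h1
          _ = 2 ^ q * ‖η‖ ^ q := h2
          _ ≤ 2 ^ q * (1 + ‖η‖ ^ q) :=
            mul_le_mul_of_nonneg_left (by linarith) h3.le
    have hfin : K * A ^ q + b₂ ≤ (K * (1 + b₃ * 2⁻¹) ^ q * 2 ^ q + b₂) * (1 + ‖η‖ ^ q) := by
      have hq2 : (0:ℝ) < (1 + b₃ * 2⁻¹) ^ q := Real.rpow_pos_of_pos (by positivity) q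
      have hηq : (0:ℝ) ≤ ‖η‖ ^ q := Real.rpow_nonneg (norm_nonneg η) q
      have step : A ^ q ≤ (1 + b₃ * 2⁻¹) ^ q * (2 ^ q * (1 + ‖η‖ ^ q)) := by
        calc A ^ q ≤ (1 + b₃ * 2⁻¹) ^ q * (1 + ‖η‖) ^ q := hAq
          _ ≤ (1 + b₃ * 2⁻¹) ^ q * (2 ^ q * (1 + ‖η‖ ^ q)) :=
            mul_le_mul_of_nonneg_left hnq hq2.le
      have e1 : K * A ^ q ≤ K * ((1 + b₃ * 2⁻¹) ^ q * (2 ^ q * (1 + ‖η‖ ^ q))) :=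
        mul_le_mul_of_nonneg_left step hK0.le
      have e2 : b₂ ≤ b₂ * (1 + ‖η‖ ^ q) := le_mul_of_one_le_right hb₂ (by linarith)
      have e3 : (K * (1 + b₃ * 2⁻¹) ^ q * 2 ^ q + b₂) * (1 + ‖η‖ ^ q)
          = K * ((1 + b₃ * 2⁻¹) ^ q * (2 ^ q * (1 + ‖η‖ ^ q))) + b₂ * (1 + ‖η‖ ^ q) := by
        ring
      linarith
    calc ⟪η, ξ⟫ - φ ξ ≤ A * ‖ξ‖ - c * ‖ξ‖ ^ p + b₂ := hABt
      _ ≤ K * A ^ q + b₂ := by linarith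
      _ ≤ (K * (1 + b₃ * 2⁻¹) ^ q * 2 ^ q + b₂) * (1 + ‖η‖ ^ q) := hfin
end

section
/- (Browder–Minty) Let X be a real reflexive Banach space, i.e. the canonical inclusion of X into its double dual is surjective, and let F : X → X' be a map into the continuous dual of X which is monotone (⟨F(u) − F(v), u − v⟩ ≥ 0 for all u, v ∈ X), hemicontinuous (for all u, v, w ∈ X the map t ↦ ⟨F(u + t v), w⟩ is continuous from ℝ to ℝ), and coercive (⟨F(v), v⟩ / ‖v‖ → ∞ as ‖v‖ → ∞). Then F is surjective. If moreover F is strictly monotone (⟨F(u) − F(v), u − v⟩ > 0 whenever u ≠ v), then F is also injective, hence bijective. -/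
set_option maxHeartbeats 1600000

open Filter Finset

namespace BM

/-- dot product on `Fin n → ℝ`. -/
def dot {n : ℕ} (x y : Fin n → ℝ) : ℝ := ∑ i, x i * y i

/-- squared Euclidean norm. -/
def q {n : ℕ} (x : Fin n → ℝ) : ℝ := ∑ i, x i ^ 2

lemma q_nonneg {n : ℕ} (x : Fin n → ℝ) : 0 ≤ q x :=
  Finset.sum_nonneg fun i _ => sq_nonneg _

lemma dot_self {n : ℕ} (x : Fin n → ℝ) : dot x x = q x := by
  simp [dot, q, sq]

lemma q_eq_zero {n : ℕ} {x : Fin n → ℝ} (h : q x ≤ 0) : x = 0 := by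
  have := Finset.sum_eq_zero_iff_of_nonneg (fun i (_ : i ∈ Finset.univ) => sq_nonneg (x i))
  have hz : q x = 0 := le_antisymm h (q_nonneg x)
  funext i
  have := (this.1 hz) i (Finset.mem_univ i)
  exact pow_eq_zero_iff (n := 2) (by norm_num) |>.1 this

lemma sq_coord_le_q {n : ℕ} (x : Fin n → ℝ) (i : Fin n) : x i ^ 2 ≤ q x :=
  Finset.single_le_sum (fun j _ => sq_nonneg (x j)) (Finset.mem_univ i)

lemma cauchy_schwarz {n : ℕ} (x y : Fin n → ℝ) : dot x y ^ 2 ≤ q x * q y :=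
  Finset.sum_mul_sq_le_sq_mul_sq _ _ _

lemma dot_le {n : ℕ} (x y : Fin n → ℝ) : dot x y ≤ Real.sqrt (q x) * Real.sqrt (q y) := by
  have h1 : dot x y ≤ |dot x y| := le_abs_self _
  have h2 : |dot x y| = Real.sqrt (dot x y ^ 2) := (Real.sqrt_sq_eq_abs _).symm
  have h3 : Real.sqrt (dot x y ^ 2) ≤ Real.sqrt (q x * q y) :=
    Real.sqrt_le_sqrt (cauchy_schwarz x y)
  calc dot x y ≤ Real.sqrt (dot x y ^ 2) := h2 ▸ h1
  _ ≤ Real.sqrt (q x * q y) := h3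
  _ = Real.sqrt (q x) * Real.sqrt (q y) := Real.sqrt_mul (q_nonneg x) _

/-- key consequence of strong monotonicity + Cauchy-Schwarz -/
lemma q_le_of_strong {n : ℕ} {m : ℝ} (hm : 0 < m) {d e : Fin n → ℝ}
    (h : m * q d ≤ dot e d) : q d ≤ q e / m ^ 2 := by
  rcases le_or_gt (q d) 0 with hd | hd
  · have : q d = 0 := le_antisymm hd (q_nonneg d)
    rw [this]
    exact div_nonneg (q_nonneg e) (by positivity)
  · have h2 : m * q d ≤ Real.sqrt (q e) * Real.sqrt (q d) := le_trans h (dot_le e d)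
    have hsq : q d = Real.sqrt (q d) * Real.sqrt (q d) :=
      (Real.mul_self_sqrt (q_nonneg d)).symm
    have hsd : 0 < Real.sqrt (q d) := Real.sqrt_pos.2 hd
    have h3 : m * Real.sqrt (q d) ≤ Real.sqrt (q e) := by
      have := h2
      rw [hsq] at this
      nlinarith [hsd]
    have h4 : (m * Real.sqrt (q d)) ^ 2 ≤ Real.sqrt (q e) ^ 2 := by
      have hnn : 0 ≤ m * Real.sqrt (q d) := by positivity
      nlinarith
    rw [Real.sq_sqrt (q_nonneg e)] at h4
    rw [mul_pow, Real.sq_sqrt (q_nonneg d)] at h4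
    rw [le_div_iff₀ (by positivity)]
    linarith

lemma continuous_q {n : ℕ} : Continuous (q (n := n)) := by
  unfold q
  exact continuous_finset_sum _ fun i _ => (continuous_apply i).pow 2

/-- continuity of `t ↦ Fin.snoc y t` in both arguments -/
lemma continuous_snoc {n : ℕ} {α : Type*} [TopologicalSpace α] {y : α → Fin n → ℝ}
    {t : α → ℝ} (hy : Continuous y) (ht : Continuous t) :
    Continuous (fun a => (Fin.snoc (y a) (t a) : Fin (n+1) → ℝ)) := by
  apply continuous_pi
  intro j
  refine Fin.lastCases ?_ ?_ j
  · simpa using ht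
  · intro i
    simpa [Function.comp_def] using (continuous_apply i).comp hy

/-- **Surjectivity of strongly monotone continuous maps on ℝⁿ**, by induction on n. -/
lemma surj_strong_mono : ∀ (n : ℕ) (m : ℝ), 0 < m →
    ∀ g : (Fin n → ℝ) → (Fin n → ℝ), Continuous g →
    (∀ x y, m * q (x - y) ≤ dot (g x - g y) (x - y)) → Function.Surjective g := by
  intro n
  induction n with
  | zero =>
    intro m hm g hg hmono b
    exact ⟨0, Subsingleton.elim _ _⟩
  | succ n ih =>
    intro m hm g hg hmono b
    -- reduce to finding a zero of G = g - b
    set G : (Fin (n+1) → ℝ) → (Fin (n+1) → ℝ) := fun x => g x - b with hG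
    have hGc : Continuous G := hg.sub continuous_const
    have hGm : ∀ x y, m * q (x - y) ≤ dot (G x - G y) (x - y) := by
      intro x y; simpa [hG, sub_sub_sub_cancel_right] using hmono x y
    suffices h : ∃ x, G x = 0 by
      obtain ⟨x, hx⟩ := h
      exact ⟨x, by have := congrArg (· + b) hx; simpa [hG] using this⟩
    -- the reduced maps
    set Gt : ℝ → (Fin n → ℝ) → (Fin n → ℝ) :=
      fun t y i => G (Fin.snoc y t) (Fin.castSucc i) with hGt
    have hGtc : ∀ t, Continuous (Gt t) := by
      intro t
      apply continuous_pi
      intro i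
      exact (continuous_apply _).comp (hGc.comp (continuous_snoc continuous_id continuous_const))
    -- key computation: the "reduced" dot products
    have hsplit : ∀ (y y' : Fin n → ℝ) (t t' : ℝ),
        dot (G (Fin.snoc y t) - G (Fin.snoc y' t')) (Fin.snoc y t - Fin.snoc y' t')
          = dot (Gt t y - Gt t' y') (y - y')
            + (G (Fin.snoc y t) (Fin.last n) - G (Fin.snoc y' t') (Fin.last n)) * (t - t') := by
      intro y y' t t'
      unfold dot
      rw [Fin.sum_univ_castSucc]
      simp [hGt]
    have hqsplit : ∀ (y y' : Fin n → ℝ) (t t' : ℝ),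
        q (Fin.snoc y t - Fin.snoc y' t' : Fin (n+1) → ℝ) = q (y - y') + (t - t') ^ 2 := by
      intro y y' t t'
      unfold q
      rw [Fin.sum_univ_castSucc]
      simp
    have hGtm : ∀ t, ∀ x y, m * q (x - y) ≤ dot (Gt t x - Gt t y) (x - y) := by
      intro t x y
      have h1 := hGm (Fin.snoc x t) (Fin.snoc y t)
      rw [hsplit x y t t, hqsplit x y t t] at h1
      simpa using h1
    -- solve reduced problem for each t
    have hsurj : ∀ t : ℝ, ∃! y, Gt t y = 0 := by
      intro t
      obtain ⟨y, hy⟩ := ih m hm (Gt t) (hGtc t) (hGtm t) 0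
      refine ⟨y, hy, ?_⟩
      intro y' hy'
      have := hGtm t y' y
      rw [hy, hy'] at this
      simp only [sub_zero, dot] at this
      have h0 : m * q (y' - y) ≤ 0 := by simpa [dot] using this
      have hq : q (y' - y) ≤ 0 := by nlinarith [q_nonneg (y' - y)]
      have := q_eq_zero hq
      exact sub_eq_zero.1 this
    -- the implicit function t ↦ y t
    have hsurj' : ∀ t : ℝ, ∃ y, Gt t y = 0 := fun t => (hsurj t).exists
    choose y hy using hsurj'
    -- continuity of y
    have hycont : Continuous y := by
      rw [continuous_iff_continuousAt]
      intro s
      have hec : Continuous (fun t => Gt s (y s) - Gt t (y s)) := by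
        apply Continuous.sub continuous_const
        apply continuous_pi; intro i
        exact (continuous_apply _).comp
          (hGc.comp (continuous_snoc continuous_const continuous_id))
      have hqd : ∀ t, q (y t - y s) ≤ q (Gt s (y s) - Gt t (y s)) / m ^ 2 := by
        intro t
        apply q_le_of_strong hm
        have h1 := hGtm t (y t) (y s)
        rw [hy t] at h1
        have heq : (0 : Fin n → ℝ) - Gt t (y s) = Gt s (y s) - Gt t (y s) := by
          rw [hy s]
        rw [heq] at h1
        exact h1
      have hbt : Tendsto (fun t => Real.sqrt (q (Gt s (y s) - Gt t (y s)) / m ^ 2))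
          (nhds s) (nhds 0) := by
        have h2 : Tendsto (fun t => q (Gt s (y s) - Gt t (y s)) / m ^ 2) (nhds s)
            (nhds (q (Gt s (y s) - Gt s (y s)) / m ^ 2)) :=
          ((continuous_q.comp hec).div_const _).tendsto s
        have h3 : q (Gt s (y s) - Gt s (y s)) / m ^ 2 = 0 := by
          simp [q]
        rw [h3] at h2
        have := (Real.continuous_sqrt.tendsto 0).comp h2
        simpa [Function.comp_def] using this
      unfold ContinuousAt
      rw [tendsto_pi_nhds]
      intro i
      rw [tendsto_iff_dist_tendsto_zero]
      apply squeeze_zero (fun t => dist_nonneg) ?_ hbt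
      intro t
      rw [Real.dist_eq, ← Real.sqrt_sq_eq_abs]
      apply Real.sqrt_le_sqrt
      calc (y t i - y s i) ^ 2 = ((y t - y s) i) ^ 2 := by simp
      _ ≤ q (y t - y s) := sq_coord_le_q _ i
      _ ≤ q (Gt s (y s) - Gt t (y s)) / m ^ 2 := hqd t
    -- the scalar function h
    have hhm : ∀ t s' : ℝ, m * (t - s') ^ 2 ≤
        (G (Fin.snoc (y t) t) (Fin.last n) - G (Fin.snoc (y s') s') (Fin.last n)) * (t - s') := by
      intro t s'
      have h1 := hGm (Fin.snoc (y t) t) (Fin.snoc (y s') s')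
      rw [hsplit, hqsplit, hy t, hy s'] at h1
      have hd0 : dot ((0 : Fin n → ℝ) - 0) (y t - y s') = 0 := by simp [dot]
      rw [hd0] at h1
      nlinarith [q_nonneg (y t - y s')]
    have hhc : Continuous (fun t => G (Fin.snoc (y t) t) (Fin.last n)) :=
      (continuous_apply _).comp (hGc.comp (continuous_snoc hycont continuous_id))
    set h : ℝ → ℝ := fun t => G (Fin.snoc (y t) t) (Fin.last n) with hhdef
    set T : ℝ := (|h 0| + 1) / m with hT
    have hTpos : 0 < T := by
      rw [hT]; positivity
    have hmT : m * T = |h 0| + 1 := by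
      rw [hT]; field_simp
    have hpos : 0 ≤ h T := by
      have h1 := hhm T 0
      have h2 : m * T ^ 2 ≤ (h T - h 0) * T := by simpa using h1
      nlinarith [le_abs_self (h 0), neg_abs_le (h 0)]
    have hneg : h (-T) ≤ 0 := by
      have h1 := hhm (-T) 0
      have h2 : m * T ^ 2 ≤ (h (-T) - h 0) * (-T) := by
        have : (-T - 0 : ℝ) = -T := by ring
        rw [this] at h1
        simpa [neg_sq] using h1
      nlinarith [le_abs_self (h 0), neg_abs_le (h 0)]
    have hivt : ∃ t0 ∈ Set.Icc (-T) T, h t0 = 0 := by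
      have hmem : (0:ℝ) ∈ Set.Icc (h (-T)) (h T) := ⟨hneg, hpos⟩
      have := intermediate_value_Icc (by linarith : (-T:ℝ) ≤ T) hhc.continuousOn
      obtain ⟨t0, h1, h2⟩ := this hmem
      exact ⟨t0, h1, h2⟩
    obtain ⟨t0, _, ht0⟩ := hivt
    refine ⟨Fin.snoc (y t0) t0, ?_⟩
    funext j
    refine Fin.lastCases ?_ ?_ j
    · simpa [hhdef] using ht0
    · intro i
      have := congrFun (hy t0) i
      simpa [hGt] using this

lemma q_smul {n : ℕ} (a : ℝ) (x : Fin n → ℝ) : q (a • x) = a ^ 2 * q x := by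
  simp [q, Finset.mul_sum, mul_pow]

lemma dot_smul_right {n : ℕ} (a : ℝ) (x y : Fin n → ℝ) : dot x (a • y) = a * dot x y := by
  simp only [dot, Pi.smul_apply, smul_eq_mul, Finset.mul_sum]
  apply Finset.sum_congr rfl
  intro i _
  ring

/-- compactness of the `q`-ball -/
lemma isCompact_qball {n : ℕ} (R : ℝ) (hR : 0 ≤ R) :
    IsCompact {x : Fin n → ℝ | q x ≤ R ^ 2} := by
  apply IsCompact.of_isClosed_subset
    (isCompact_univ_pi (fun i : Fin n => isCompact_Icc (a := -R) (b := R)))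
  · exact isClosed_le continuous_q continuous_const
  · intro x hx
    simp only [Set.mem_univ_pi]
    intro i
    have h1 : x i ^ 2 ≤ R ^ 2 := le_trans (sq_coord_le_q x i) hx
    have : |x i| ≤ R := by
      rw [← Real.sqrt_sq_eq_abs, ← Real.sqrt_sq hR]
      exact Real.sqrt_le_sqrt h1
    exact ⟨neg_le_of_abs_le this, le_of_abs_le this⟩

/-- **zero of a monotone continuous map pointing outward on a sphere** -/
lemma zero_in_ball {n : ℕ} (g : (Fin n → ℝ) → (Fin n → ℝ)) (hg : Continuous g)
    (hmono : ∀ x y, 0 ≤ dot (g x - g y) (x - y)) (R : ℝ) (hR : 0 < R)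
    (hbd : ∀ x, q x = R ^ 2 → 0 ≤ dot (g x) x) :
    ∃ x, q x ≤ R ^ 2 ∧ g x = 0 := by
  -- perturbed maps and their zeros
  have key : ∀ k : ℕ, ∃ x, q x ≤ R ^ 2 ∧ g x = -((k+1 : ℝ)⁻¹) • x := by
    intro k
    set ε : ℝ := ((k:ℝ)+1)⁻¹ with hε
    have hεpos : 0 < ε := by positivity
    have hsurj := surj_strong_mono n ε hεpos (fun x => g x + ε • x)
      (hg.add (continuous_id.const_smul ε))
      (by
        intro x y
        have h1 := hmono x y
        have h2 : (g x + ε • x) - (g y + ε • y) = (g x - g y) + ε • (x - y) := by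
          abel_nf
          simp [smul_sub]
          abel
        rw [h2]
        have h3 : dot ((g x - g y) + ε • (x - y)) (x - y)
            = dot (g x - g y) (x - y) + ε * q (x - y) := by
          simp [dot, q, Finset.sum_add_distrib, Finset.mul_sum, sq]
          ring_nf
          rw [← Finset.sum_add_distrib]
          apply Finset.sum_congr rfl
          intro i _
          ring
        rw [h3]
        linarith)
    obtain ⟨x, hx⟩ := hsurj 0
    have hgx : g x = -ε • x := by
      have := congrArg (· - ε • x) hx
      simpa [neg_smul] using this
    refine ⟨x, ?_, by simpa [hε] using hgx⟩
    -- the a priori bound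
    by_contra hqx
    push_neg at hqx
    have hqpos : (0:ℝ) < q x := lt_trans (by positivity) hqx
    set lam : ℝ := R / Real.sqrt (q x) with hlam
    have hsq : R < Real.sqrt (q x) := by
      have := Real.sqrt_lt_sqrt (by positivity) hqx
      rwa [Real.sqrt_sq hR.le] at this
    have hlam1 : lam < 1 := by
      rw [hlam, div_lt_one (by positivity)]
      exact hsq
    have hlampos : 0 < lam := by
      rw [hlam]; positivity
    have hqy : q (lam • x) = R ^ 2 := by
      rw [q_smul, hlam, div_pow, Real.sq_sqrt hqpos.le]
      field_simp
    have h1 := hmono x (lam • x)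
    have hxy : x - lam • x = (1 - lam) • x := by
      rw [sub_smul, one_smul]
    rw [hxy] at h1
    have h2 : dot (g x - g (lam • x)) ((1-lam) • x)
        = (1-lam) * dot (g x) x - ((1-lam)/lam) * dot (g (lam • x)) (lam • x) := by
      have e1 : dot (g x - g (lam • x)) ((1-lam) • x)
          = (1-lam) * (dot (g x) x - dot (g (lam • x)) x) := by
        unfold dot
        rw [mul_sub, Finset.mul_sum, Finset.mul_sum, ← Finset.sum_sub_distrib]
        apply Finset.sum_congr rfl
        intro i _
        simp only [Pi.sub_apply, Pi.smul_apply, smul_eq_mul]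
        ring
      have e2 : dot (g (lam • x)) (lam • x) = lam * dot (g (lam • x)) x := dot_smul_right _ _ _
      rw [e1, e2]
      field_simp
    rw [h2] at h1
    have h3 : dot (g x) x = -ε * q x := by
      rw [hgx]
      simp [dot, q, Finset.mul_sum, sq, neg_smul]
      ring_nf
    have h4 : 0 ≤ dot (g (lam • x)) (lam • x) := hbd _ hqy
    rw [h3] at h1
    have h5 : (1 - lam) * (-ε * q x) < 0 := by
      apply mul_neg_of_pos_of_neg
      · linarith
      · nlinarith
    nlinarith [mul_nonneg (div_nonneg (by linarith : (0:ℝ) ≤ 1 - lam) hlampos.le) h4]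
  choose xs hxq hxg using key
  obtain ⟨x, hxmem, φ, hφmono, hφtend⟩ :=
    (isCompact_qball R hR.le).tendsto_subseq (x := xs) hxq
  refine ⟨x, hxmem, ?_⟩
  have h1 : Tendsto (fun j => g (xs (φ j))) atTop (nhds (g x)) :=
    (hg.tendsto x).comp hφtend
  have h2 : Tendsto (fun j => g (xs (φ j))) atTop (nhds 0) := by
    rw [tendsto_pi_nhds]
    intro i
    rw [tendsto_iff_dist_tendsto_zero]
    apply squeeze_zero (fun t => dist_nonneg) (g := fun j => ((φ j : ℝ)+1)⁻¹ * R)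
    · intro j
      have hcf := congrFun (hxg (φ j)) i
      rw [hcf]
      have h1 : (xs (φ j) i) ^ 2 ≤ R ^ 2 := le_trans (sq_coord_le_q _ i) (hxq (φ j))
      have hb : |xs (φ j) i| ≤ R := by
        rw [← Real.sqrt_sq_eq_abs, ← Real.sqrt_sq hR.le]
        exact Real.sqrt_le_sqrt h1
      calc dist ((-((φ j : ℝ)+1)⁻¹ • xs (φ j)) i) 0
          = |(-((φ j : ℝ)+1)⁻¹) * xs (φ j) i| := by
            simp only [Pi.smul_apply, smul_eq_mul, Real.dist_eq, sub_zero]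
      _ = ((φ j : ℝ)+1)⁻¹ * |xs (φ j) i| := by
            rw [abs_mul, abs_neg, abs_of_pos (by positivity : (0:ℝ) < ((φ j : ℝ)+1)⁻¹)]
      _ ≤ ((φ j : ℝ)+1)⁻¹ * R := mul_le_mul_of_nonneg_left hb (by positivity)
    · have ht : Tendsto (fun j => ((φ j : ℝ)+1)⁻¹) atTop (nhds 0) := by
        apply Tendsto.comp tendsto_inv_atTop_zero
        apply tendsto_atTop_add_const_right
        exact tendsto_natCast_atTop_atTop.comp hφmono.tendsto_atTop
      simpa using ht.mul_const R
  exact tendsto_nhds_unique h1 h2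

lemma demicontinuous
    {X : Type*} [NormedAddCommGroup X] [NormedSpace ℝ X]
    (F : X → StrongDual ℝ X)
    (hmono : ∀ u v : X, 0 ≤ (F u - F v) (u - v))
    (hhemi : ∀ u v w : X, Continuous fun t : ℝ => F (u + t • v) w)
    {n : ℕ} (v : Fin n → X) :
    Continuous (fun c : Fin n → ℝ => (fun i => F (∑ j, c j • v j) (v i) : Fin n → ℝ)) := by
  have hmono' : ∀ a b : X, F b (a - b) ≤ F a (a - b) := by
    intro a b
    have h := hmono a b
    rw [ContinuousLinearMap.sub_apply] at h
    linarith
  set u : (Fin n → ℝ) → X := fun c => ∑ j, c j • v j with hu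
  have hucont : Continuous u := by
    apply continuous_finset_sum
    intro j _
    exact (continuous_apply j).smul continuous_const
  have hulin : ∀ c d : Fin n → ℝ, u c - u d = u (c - d) := by
    intro c d
    rw [hu]
    simp only [Pi.sub_apply, sub_smul]
    rw [Finset.sum_sub_distrib]
  have hFu : ∀ (z : X) (c : Fin n → ℝ), F z (u c) = ∑ j, c j * F z (v j) := by
    intro z c
    rw [hu]
    simp only [map_sum, map_smul, smul_eq_mul]
  have huadd : ∀ (c : Fin n → ℝ) (t : ℝ) (i : Fin n),
      u (c + Pi.single i t) = u c + t • v i := by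
    intro c t i
    rw [hu]
    simp only [Pi.add_apply, add_smul]
    rw [Finset.sum_add_distrib]
    congr 1
    rw [Finset.sum_eq_single i]
    · simp
    · intro j _ hj
      simp [Pi.single_apply, hj]
    · simp
  apply continuous_iff_seqContinuous.mpr
  intro cs c hc
  set A : ℕ → Fin n → ℝ := fun k i => F (u (cs k)) (v i) with hA
  set L : Fin n → ℝ := fun i => F (u c) (v i) with hL
  show Tendsto (fun k => A k) atTop (nhds L)
  -- eventual uniform bound on A
  set Ci : Fin n → ℝ := fun i =>
    ‖F (u c + v i)‖ * (‖v i‖ + 1) + ‖F (u c - v i)‖ * (‖v i‖ + 1) with hCi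
  have hCi0 : ∀ i, 0 ≤ Ci i := by
    intro i
    rw [hCi]
    positivity
  set CC : ℝ := ∑ i, Ci i with hCC
  have hCC0 : 0 ≤ CC := Finset.sum_nonneg fun i _ => hCi0 i
  set Cb : ℝ := 2 * CC with hCb
  have hucs : Tendsto (fun k => u (cs k)) atTop (nhds (u c)) := (hucont.tendsto c).comp hc
  have hBnd : ∀ᶠ k in atTop, ‖u (cs k) - u c‖ ≤ 1 := by
    have h0 : Tendsto (fun k => ‖u (cs k) - u c‖) atTop (nhds 0) := by
      rw [← tendsto_iff_norm_sub_tendsto_zero]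
      exact hucs
    exact (h0.eventually (gt_mem_nhds one_pos)).mono fun k h => h.le
  have hδ : Tendsto (fun k => dist (cs k) c) atTop (nhds 0) :=
    tendsto_iff_dist_tendsto_zero.1 hc
  have hδsmall : ∀ᶠ k in atTop, dist (cs k) c ≤ 1 / (2 * (n + 1)) := by
    have := hδ.eventually (gt_mem_nhds (by positivity : (0:ℝ) < 1 / (2 * (n + 1))))
    exact this.mono fun k h => h.le
  -- the correction term d k
  have hd : ∀ k, F (u (cs k)) (u (cs k) - u c) = ∑ j, (cs k j - c j) * A k j := by
    intro k
    rw [hulin, hFu]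
    rfl
  have habs : ∀ k, |F (u (cs k)) (u (cs k) - u c)| ≤ dist (cs k) c * ∑ j, |A k j| := by
    intro k
    rw [hd k]
    calc |∑ j, (cs k j - c j) * A k j| ≤ ∑ j, |(cs k j - c j) * A k j| :=
          Finset.abs_sum_le_sum_abs _ _
    _ ≤ ∑ j, dist (cs k) c * |A k j| := by
          apply Finset.sum_le_sum
          intro j _
          rw [abs_mul]
          apply mul_le_mul_of_nonneg_right _ (abs_nonneg _)
          rw [← Real.dist_eq]
          exact dist_le_pi_dist (cs k) c j
    _ = dist (cs k) c * ∑ j, |A k j| := by rw [Finset.mul_sum]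
  have hup : ∀ᶠ k in atTop, ∀ i, |A k i| ≤ Ci i + |F (u (cs k)) (u (cs k) - u c)| := by
    filter_upwards [hBnd] with k hB
    intro i
    rw [abs_le]
    constructor
    · -- lower bound from z = u c - v i
      have h1 : F (u (cs k)) ((u c - v i) - u (cs k)) ≤
          F (u c - v i) ((u c - v i) - u (cs k)) := hmono' (u c - v i) (u (cs k))
      have h2 : F (u c - v i) ((u c - v i) - u (cs k)) ≤ ‖F (u c - v i)‖ * (‖v i‖ + 1) := by
        calc F (u c - v i) ((u c - v i) - u (cs k))
            ≤ ‖F (u c - v i) ((u c - v i) - u (cs k))‖ := le_abs_self _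
        _ ≤ ‖F (u c - v i)‖ * ‖(u c - v i) - u (cs k)‖ :=
            ContinuousLinearMap.le_opNorm _ _
        _ ≤ ‖F (u c - v i)‖ * (‖v i‖ + 1) := by
            apply mul_le_mul_of_nonneg_left _ (norm_nonneg _)
            calc ‖(u c - v i) - u (cs k)‖ = ‖(-(v i)) + (u c - u (cs k))‖ := by
                  congr 1
                  abel
            _ ≤ ‖-(v i)‖ + ‖u c - u (cs k)‖ := norm_add_le _ _
            _ ≤ ‖v i‖ + 1 := by
                rw [norm_neg, ← norm_neg (u c - u (cs k))]
                simp only [neg_sub]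
                linarith
      have h3 : F (u (cs k)) ((u c - v i) - u (cs k)) =
          -(A k i) - F (u (cs k)) (u (cs k) - u c) := by
        have : (u c - v i) - u (cs k) = -(v i) + -(u (cs k) - u c) := by abel
        rw [this, map_add, map_neg, map_neg]
        rfl
      have h4 : -(A k i) ≤ ‖F (u c - v i)‖ * (‖v i‖ + 1)
          + F (u (cs k)) (u (cs k) - u c) := by
        rw [h3] at h1
        linarith
      have h5 : F (u (cs k)) (u (cs k) - u c) ≤ |F (u (cs k)) (u (cs k) - u c)| := le_abs_self _
      rw [hCi]
      have h6 : (0:ℝ) ≤ ‖F (u c + v i)‖ * (‖v i‖ + 1) := by positivity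
      simp only
      linarith
    · -- upper bound from z = u c + v i
      have h1 : F (u (cs k)) ((u c + v i) - u (cs k)) ≤
          F (u c + v i) ((u c + v i) - u (cs k)) := hmono' (u c + v i) (u (cs k))
      have h2 : F (u c + v i) ((u c + v i) - u (cs k)) ≤ ‖F (u c + v i)‖ * (‖v i‖ + 1) := by
        calc F (u c + v i) ((u c + v i) - u (cs k))
            ≤ ‖F (u c + v i) ((u c + v i) - u (cs k))‖ := le_abs_self _
        _ ≤ ‖F (u c + v i)‖ * ‖(u c + v i) - u (cs k)‖ :=
            ContinuousLinearMap.le_opNorm _ _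
        _ ≤ ‖F (u c + v i)‖ * (‖v i‖ + 1) := by
            apply mul_le_mul_of_nonneg_left _ (norm_nonneg _)
            calc ‖(u c + v i) - u (cs k)‖ = ‖(v i) + (u c - u (cs k))‖ := by
                  congr 1
                  abel
            _ ≤ ‖v i‖ + ‖u c - u (cs k)‖ := norm_add_le _ _
            _ ≤ ‖v i‖ + 1 := by
                rw [← norm_neg (u c - u (cs k))]
                simp only [neg_sub]
                linarith
      have h3 : F (u (cs k)) ((u c + v i) - u (cs k)) =
          A k i - F (u (cs k)) (u (cs k) - u c) := by
        have : (u c + v i) - u (cs k) = v i + -(u (cs k) - u c) := by abel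
        rw [this, map_add, map_neg]
        rfl
      have h4 : A k i ≤ ‖F (u c + v i)‖ * (‖v i‖ + 1)
          + F (u (cs k)) (u (cs k) - u c) := by
        rw [h3] at h1
        linarith
      have h5 : F (u (cs k)) (u (cs k) - u c) ≤ |F (u (cs k)) (u (cs k) - u c)| := le_abs_self _
      rw [hCi]
      have h6 : (0:ℝ) ≤ ‖F (u c - v i)‖ * (‖v i‖ + 1) := by positivity
      simp only
      linarith
  have hbound : ∀ᶠ k in atTop, ∀ i, |A k i| ≤ Cb := by
    filter_upwards [hup, hδsmall] with k hk hδk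
    set S : ℝ := ∑ j, |A k j| with hS
    have hSnn : (0:ℝ) ≤ S := Finset.sum_nonneg fun j _ => abs_nonneg _
    have h1 : S ≤ CC + n * |F (u (cs k)) (u (cs k) - u c)| := by
      calc S ≤ ∑ j, (Ci j + |F (u (cs k)) (u (cs k) - u c)|) :=
            Finset.sum_le_sum fun j _ => hk j
      _ = CC + n * |F (u (cs k)) (u (cs k) - u c)| := by
            rw [Finset.sum_add_distrib, hCC]
            simp [mul_comm]
    have h2 : |F (u (cs k)) (u (cs k) - u c)| ≤ dist (cs k) c * S := habs k
    have hstep : (n:ℝ) * (1 / (2 * ((n:ℝ) + 1))) ≤ 1 / 2 := by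
      have hpos : (0:ℝ) < 2 * ((n:ℝ) + 1) := by positivity
      rw [mul_one_div, div_le_div_iff₀ hpos (by norm_num)]
      push_cast
      linarith
    have h3 : (n:ℝ) * (dist (cs k) c * S) ≤ (1/2) * S := by
      calc (n:ℝ) * (dist (cs k) c * S) ≤ (n:ℝ) * ((1 / (2 * ((n:ℝ) + 1))) * S) := by
            apply mul_le_mul_of_nonneg_left _ (Nat.cast_nonneg n)
            exact mul_le_mul_of_nonneg_right hδk hSnn
      _ = ((n:ℝ) * (1 / (2 * ((n:ℝ) + 1)))) * S := by ring
      _ ≤ (1/2) * S := mul_le_mul_of_nonneg_right hstep hSnn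
    have h4 : S ≤ 2 * CC := by
      have h5 : (n:ℝ) * |F (u (cs k)) (u (cs k) - u c)| ≤ (1/2) * S := by
        calc (n:ℝ) * |F (u (cs k)) (u (cs k) - u c)| ≤ (n:ℝ) * (dist (cs k) c * S) :=
          mul_le_mul_of_nonneg_left h2 (Nat.cast_nonneg n)
        _ ≤ (1/2) * S := h3
      linarith
    intro i
    calc |A k i| ≤ S := Finset.single_le_sum (fun j _ => abs_nonneg (A k j)) (Finset.mem_univ i)
    _ ≤ 2 * CC := h4
    _ = Cb := by rw [hCb]
  -- now extract subsequences and identify the limit via Minty's trick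
  have hCb0 : 0 ≤ Cb := by rw [hCb]; linarith
  apply tendsto_of_subseq_tendsto
  intro ns hns
  have hev2 : ∀ᶠ j in atTop, ∀ i, |A (ns j) i| ≤ Cb := hns.eventually hbound
  obtain ⟨K0, hK0⟩ := eventually_atTop.1 hev2
  have hboxcpt : IsCompact (Set.pi Set.univ (fun _ : Fin n => Set.Icc (-Cb) Cb)) :=
    isCompact_univ_pi fun _ => isCompact_Icc
  have hw : ∀ j : ℕ, A (ns (j + K0)) ∈ Set.pi Set.univ (fun _ : Fin n => Set.Icc (-Cb) Cb) := by
    intro j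
    rw [Set.mem_univ_pi]
    intro i
    have := hK0 (j + K0) (Nat.le_add_left _ _) i
    exact abs_le.1 this
  obtain ⟨l, _, φ, hφ, hwφ⟩ := hboxcpt.tendsto_subseq hw
  refine ⟨fun j => φ j + K0, ?_⟩
  -- the subsequence indices
  set ks : ℕ → ℕ := fun j => ns (φ j + K0) with hks
  have hks_tend : Tendsto ks atTop atTop := by
    apply hns.comp
    apply tendsto_atTop_mono (fun j => le_trans (hφ.le_apply) (Nat.le_add_right _ _))
    exact tendsto_id
  have hcsk : Tendsto (fun j => cs (ks j)) atTop (nhds c) := hc.comp hks_tend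
  have hAk : Tendsto (fun j => A (ks j)) atTop (nhds l) := hwφ
  -- Minty: identify l with L
  have hineq : ∀ d : Fin n → ℝ, F (u d) (u c - u d) ≤ ∑ j, (c j - d j) * l j := by
    intro d
    have hLHS : Tendsto (fun j => F (u d) (u (cs (ks j)) - u d)) atTop
        (nhds (F (u d) (u c - u d))) := by
      have hcont : Continuous (fun x : Fin n → ℝ => F (u d) (u x - u d)) :=
        (F (u d)).continuous.comp (hucont.sub continuous_const)
      exact (hcont.tendsto c).comp hcsk
    have hRHS : Tendsto (fun j => F (u (cs (ks j))) (u (cs (ks j)) - u d)) atTop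
        (nhds (∑ j', (c j' - d j') * l j')) := by
      have hrw : ∀ j, F (u (cs (ks j))) (u (cs (ks j)) - u d)
          = ∑ j', (cs (ks j) j' - d j') * A (ks j) j' := by
        intro j
        rw [hulin, hFu]
        rfl
      simp only [hrw]
      apply tendsto_finset_sum
      intro j' _
      apply Tendsto.mul
      · have hcoord : Tendsto (fun j => cs (ks j) j') atTop (nhds (c j')) :=
          ((continuous_apply j').tendsto c).comp hcsk
        exact hcoord.sub tendsto_const_nhds
      · exact ((continuous_apply j').tendsto l).comp hAk
    apply le_of_tendsto_of_tendsto' hLHS hRHS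
    intro j
    exact hmono' (u (cs (ks j))) (u d)
  have hlL : l = L := by
    funext i
    have hkey : ∀ t : ℝ, t ≠ 0 → -(t * F (u c + t • v i) (v i)) ≤ -(t * l i) := by
      intro t _
      have h1 := hineq (c + Pi.single i t)
      rw [huadd] at h1
      have h2 : u c - (u c + t • v i) = -(t • v i) := by abel
      rw [h2, map_neg, map_smul] at h1
      have h3 : ∑ j', (c j' - (c + Pi.single i t : Fin n → ℝ) j') * l j' = -(t * l i) := by
        rw [Finset.sum_eq_single i]
        · simp only [Pi.add_apply, Pi.single_eq_same]
          ring
        · intro j' _ hj'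
          simp [Pi.single_apply, hj']
        · simp
      rw [h3] at h1
      simpa using h1
    have hψ : Continuous (fun t : ℝ => F (u c + t • v i) (v i)) := hhemi (u c) (v i) (v i)
    have hψ0 : F (u c + (0:ℝ) • v i) (v i) = F (u c) (v i) := by simp
    have hle : l i ≤ F (u c) (v i) := by
      have htend : Tendsto (fun t : ℝ => F (u c + t • v i) (v i)) (nhdsWithin 0 (Set.Ioi 0))
          (nhds (F (u c) (v i))) := by
        rw [← hψ0]
        exact (hψ.tendsto 0).mono_left nhdsWithin_le_nhds
      apply ge_of_tendsto htend
      filter_upwards [self_mem_nhdsWithin] with t ht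
      have := hkey t (ne_of_gt ht)
      have ht0 : (0:ℝ) < t := ht
      nlinarith
    have hge : F (u c) (v i) ≤ l i := by
      have htend : Tendsto (fun t : ℝ => F (u c + t • v i) (v i)) (nhdsWithin 0 (Set.Iio 0))
          (nhds (F (u c) (v i))) := by
        rw [← hψ0]
        exact (hψ.tendsto 0).mono_left nhdsWithin_le_nhds
      apply le_of_tendsto htend
      filter_upwards [self_mem_nhdsWithin] with t ht
      have := hkey t (ne_of_lt ht)
      have ht0 : t < 0 := ht
      nlinarith
    rw [hL]
    exact le_antisymm hle hge
  rw [← hlL]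
  exact hwφ

lemma galerkin
    {X : Type*} [NormedAddCommGroup X] [NormedSpace ℝ X]
    (F : X → StrongDual ℝ X)
    (hmono : ∀ u v : X, 0 ≤ (F u - F v) (u - v))
    (hhemi : ∀ u v w : X, Continuous fun t : ℝ => F (u + t • v) w)
    (b : StrongDual ℝ X) (M : ℝ) (hM1 : 1 ≤ M)
    (hcoercive : ∀ z : X, M ≤ ‖z‖ → b z < F z z)
    (S : Finset X) :
    ∃ u : X, u ∈ Submodule.span ℝ (S : Set X) ∧ ‖u‖ ≤ M ∧
      ∀ w ∈ Submodule.span ℝ (S : Set X), F u w = b w := by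
  classical
  set V : Submodule ℝ X := Submodule.span ℝ (S : Set X) with hV
  obtain ⟨n, v, hvV, hlin, hspanv⟩ :
      ∃ (n : ℕ) (v : Fin n → X), (∀ i, v i ∈ V) ∧ LinearIndependent ℝ v ∧
        (∀ w ∈ V, ∃ c : Fin n → ℝ, ∑ j, c j • v j = w) := by
    refine ⟨Module.finrank ℝ V, fun i => ((Module.finBasis ℝ V) i : X), fun i => ((Module.finBasis ℝ V) i).2, ?_, ?_⟩
    · exact (Module.finBasis ℝ V).linearIndependent.map' V.subtype (Submodule.ker_subtype V)
    · intro w hw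
      set bas := Module.finBasis ℝ V with hbas
      refine ⟨fun j => bas.repr ⟨w, hw⟩ j, ?_⟩
      have hrepr := bas.sum_repr ⟨w, hw⟩
      calc (∑ j, bas.repr ⟨w, hw⟩ j • ((bas j : X)))
          = ((∑ j, bas.repr ⟨w, hw⟩ j • bas j : V) : X) := by
            rw [Submodule.coe_sum]
            apply Finset.sum_congr rfl
            intro j _
            rw [SetLike.val_smul]
      _ = w := by rw [hrepr]
  -- the linear parametrization
  set ℓ : (Fin n → ℝ) →ₗ[ℝ] X :=
    { toFun := fun c => ∑ j, c j • v j
      map_add' := by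
        intro a b'
        simp [add_smul, Finset.sum_add_distrib]
      map_smul' := by
        intro m a
        simp [smul_smul, Finset.smul_sum] } with hℓ
  have hℓdef : ∀ c, ℓ c = ∑ j, c j • v j := fun c => rfl
  have hℓmem : ∀ c, ℓ c ∈ V := by
    intro c
    rw [hℓdef]
    exact Submodule.sum_smul_mem V _ (fun i _ => hvV i)
  have hker : LinearMap.ker ℓ = ⊥ := by
    rw [LinearMap.ker_eq_bot']
    intro c hc
    rw [hℓdef] at hc
    have := Fintype.linearIndependent_iff.1 hlin c hc
    funext i
    exact this i
  obtain ⟨K, hKpos, hK⟩ := ℓ.exists_antilipschitzWith hker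
  have hKnorm : ∀ c : Fin n → ℝ, ‖c‖ ≤ (K : ℝ) * ‖ℓ c‖ := by
    intro c
    have := hK.le_mul_dist c 0
    simpa [dist_zero_right, map_zero] using this
  -- representation of elements of V
  have hspan : ∀ w ∈ V, ∃ c : Fin n → ℝ, ℓ c = w := by
    intro w hw
    obtain ⟨c, hc⟩ := hspanv w hw
    exact ⟨c, by rw [hℓdef]; exact hc⟩
  -- the Galerkin system
  set g : (Fin n → ℝ) → (Fin n → ℝ) :=
    fun c => (fun i => F (ℓ c) (v i)) - (fun i => b (v i)) with hg
  have hgdef : ∀ c i, g c i = F (ℓ c) (v i) - b (v i) := fun c i => rfl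
  have hgc : Continuous g := by
    rw [hg]
    apply Continuous.sub _ continuous_const
    exact demicontinuous F hmono hhemi v
  -- dot products against the system
  have hdot : ∀ (d : Fin n → ℝ) (G : StrongDual ℝ X),
      (∑ i, G (v i) * d i) = G (ℓ d) := by
    intro d G
    rw [hℓdef, map_sum]
    apply Finset.sum_congr rfl
    intro i _
    rw [map_smul]
    simp [mul_comm]
  have hgm : ∀ c d, 0 ≤ dot (g c - g d) (c - d) := by
    intro c d
    have e1 : dot (g c - g d) (c - d) = (F (ℓ c) - F (ℓ d)) (ℓ (c - d)) := by
      rw [← hdot (c - d) (F (ℓ c) - F (ℓ d))]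
      unfold dot
      apply Finset.sum_congr rfl
      intro i _
      rw [Pi.sub_apply, hgdef, hgdef, ContinuousLinearMap.sub_apply]
      ring
    rw [e1, map_sub ℓ]
    exact hmono (ℓ c) (ℓ d)
  -- radius
  set R : ℝ := ((K : ℝ) + 1) * M * (Real.sqrt n + 1) with hR
  have hRpos : 0 < R := by
    rw [hR]
    apply mul_pos (mul_pos (by positivity) (by linarith))
    positivity
  have hnormbig : ∀ c : Fin n → ℝ, q c = R ^ 2 → M ≤ ‖ℓ c‖ := by
    intro c hc
    rcases Nat.eq_zero_or_pos n with hn0 | hn0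
    · exfalso
      have hemp : (Finset.univ : Finset (Fin n)) = ∅ := by
        rw [Finset.univ_eq_empty_iff, hn0]
        infer_instance
      have hq0 : q c = 0 := by
        unfold q
        rw [hemp, Finset.sum_empty]
      rw [hq0] at hc
      nlinarith
    -- q c ≤ n * ‖c‖^2
    have h1 : q c ≤ n * ‖c‖ ^ 2 := by
      unfold q
      calc ∑ i, c i ^ 2 ≤ ∑ _i : Fin n, ‖c‖ ^ 2 := by
            apply Finset.sum_le_sum
            intro i _
            have := norm_le_pi_norm c i
            have h0 : |c i| ≤ ‖c‖ := by simpa [Real.norm_eq_abs] using this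
            nlinarith [abs_nonneg (c i), sq_abs (c i)]
      _ = n * ‖c‖ ^ 2 := by simp [Finset.sum_const, nsmul_eq_mul]
    have hsq : R ≤ Real.sqrt n * ‖c‖ := by
      have hss : (Real.sqrt (n:ℝ)) ^ 2 = (n:ℝ) := Real.sq_sqrt (Nat.cast_nonneg n)
      have h2 : R ^ 2 ≤ (Real.sqrt n * ‖c‖) ^ 2 := by
        nlinarith [hss, h1, hc, sq_nonneg ‖c‖]
      have h3 : 0 ≤ Real.sqrt n * ‖c‖ := by positivity
      nlinarith [hRpos, h2, h3]
    have hsn : (0:ℝ) < Real.sqrt n := Real.sqrt_pos.2 (by exact_mod_cast hn0)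
    have hcnorm : ((K : ℝ) + 1) * M ≤ ‖c‖ := by
      rw [hR] at hsq
      have hKM : 0 < ((K : ℝ) + 1) * M := by nlinarith [K.coe_nonneg]
      nlinarith [norm_nonneg c, hsq]
    have hKc := hKnorm c
    have hK1 : ‖c‖ ≤ ((K : ℝ) + 1) * ‖ℓ c‖ := by
      have : (K : ℝ) * ‖ℓ c‖ ≤ ((K : ℝ) + 1) * ‖ℓ c‖ := by
        nlinarith [norm_nonneg (ℓ c)]
      linarith
    have hKpos' : (0:ℝ) < (K : ℝ) + 1 := by positivity
    nlinarith
  have hbd : ∀ c, q c = R ^ 2 → 0 ≤ dot (g c) c := by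
    intro c hc
    have e1 : dot (g c) c = F (ℓ c) (ℓ c) - b (ℓ c) := by
      unfold dot
      rw [← hdot c (F (ℓ c)), ← hdot c b, ← Finset.sum_sub_distrib]
      apply Finset.sum_congr rfl
      intro i _
      rw [hgdef]
      ring
    rw [e1]
    have := hcoercive (ℓ c) (hnormbig c hc)
    linarith
  obtain ⟨cst, _, hgz⟩ := zero_in_ball g hgc hgm R hRpos hbd
  have hvals : ∀ i, F (ℓ cst) (v i) = b (v i) := by
    intro i
    have h0 : g cst i = 0 := by rw [hgz]; rfl
    rw [hgdef] at h0
    linarith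
  have hsum : ∀ c : Fin n → ℝ, F (ℓ cst) (ℓ c) = b (ℓ c) := by
    intro c
    rw [← hdot c (F (ℓ cst)), ← hdot c b]
    apply Finset.sum_congr rfl
    intro i _
    rw [hvals i]
  refine ⟨ℓ cst, hℓmem cst, ?_, ?_⟩
  · by_contra hnb
    push_neg at hnb
    have h1 := hcoercive (ℓ cst) hnb.le
    have h2 := hsum cst
    linarith
  · intro w hw
    obtain ⟨c, rfl⟩ := hspan w hw
    exact hsum c

theorem browder_minty'
    {X : Type*} [NormedAddCommGroup X] [NormedSpace ℝ X] [CompleteSpace X]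
    (hrefl : Function.Surjective (NormedSpace.inclusionInDoubleDual ℝ X))
    (F : X → StrongDual ℝ X)
    (hmono : ∀ u v : X, 0 ≤ (F u - F v) (u - v))
    (hhemi : ∀ u v w : X, Continuous fun t : ℝ => F (u + t • v) w)
    (hcoer : Filter.Tendsto (fun v : X => F v v / ‖v‖)
      (Filter.comap norm Filter.atTop) Filter.atTop) :
    Function.Surjective F ∧
      ((∀ u v : X, u ≠ v → 0 < (F u - F v) (u - v)) → Function.Bijective F) := by
  classical
  have hsurj : Function.Surjective F := by
    intro b
    -- coercivity: a priori bound
    obtain ⟨M, hM1, hco⟩ : ∃ M : ℝ, 1 ≤ M ∧ ∀ z : X, M ≤ ‖z‖ → b z < F z z := by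
      have h1 : ∀ᶠ z in Filter.comap norm Filter.atTop, ‖b‖ + 1 ≤ F z z / ‖z‖ :=
        hcoer.eventually (eventually_ge_atTop (‖b‖ + 1))
      rw [Filter.eventually_comap] at h1
      rw [Filter.eventually_atTop] at h1
      obtain ⟨M0, hM0⟩ := h1
      refine ⟨max M0 1, le_max_right _ _, ?_⟩
      intro z hz
      have hnz : M0 ≤ ‖z‖ := le_trans (le_max_left _ _) hz
      have h2 := hM0 ‖z‖ hnz z rfl
      have hz1 : (1:ℝ) ≤ ‖z‖ := le_trans (le_max_right _ _) hz
      have hzpos : (0:ℝ) < ‖z‖ := by linarith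
      rw [le_div_iff₀ hzpos] at h2
      have hb : b z ≤ ‖b‖ * ‖z‖ := by
        calc b z ≤ |b z| := le_abs_self _
        _ ≤ ‖b‖ * ‖z‖ := by
            have := b.le_opNorm z
            simpa [Real.norm_eq_abs] using this
      nlinarith
    -- Galerkin solutions
    have hgal := fun S : Finset X => galerkin F hmono hhemi b M hM1 hco S
    choose us husmem husbd husgal using hgal
    -- pass to the weak-* cluster point in the double dual
    obtain ⟨u0, hkey⟩ : ∃ u0 : X, ∀ w : X, 0 ≤ (b - F w) (u0 - w) := by
      set J := NormedSpace.inclusionInDoubleDual ℝ X with hJ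
      set f : Finset X → WeakDual ℝ (StrongDual ℝ X) :=
        fun S => StrongDual.toWeakDual (J (us S)) with hf
      set Kset : Set (WeakDual ℝ (StrongDual ℝ X)) :=
        WeakDual.toStrongDual ⁻¹' Metric.closedBall 0 M with hKset
      have hcpt : IsCompact Kset := WeakDual.isCompact_closedBall (𝕜 := ℝ) (E := StrongDual ℝ X) 0 M
      have hfK : ∀ S, f S ∈ Kset := by
        intro S
        rw [hKset]
        simp only [Set.mem_preimage, Metric.mem_closedBall, dist_zero_right]
        calc dist (WeakDual.toStrongDual (f S)) 0 = ‖WeakDual.toStrongDual (f S)‖ := dist_zero_right (WeakDual.toStrongDual (f S))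
        _ = ‖J (us S)‖ := rfl
        _ ≤ ‖us S‖ := NormedSpace.double_dual_bound ℝ X (us S)
        _ ≤ M := husbd S
      have hle : Filter.map f Filter.atTop ≤ Filter.principal Kset := by
        rw [Filter.le_principal_iff, Filter.mem_map]
        exact Filter.Eventually.of_forall hfK
      obtain ⟨x'', hxK, hcl⟩ := hcpt.exists_clusterPt hle
      obtain ⟨u0, hu0⟩ := hrefl (WeakDual.toStrongDual x'')
      -- key inequality for all w
      refine ⟨u0, ?_⟩
      intro w
      set φ : StrongDual ℝ X := b - F w with hφ
      set Cset : Set (WeakDual ℝ (StrongDual ℝ X)) := {z | φ w ≤ z φ} with hCset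
      have hCc : IsClosed Cset := isClosed_le continuous_const (WeakDual.eval_continuous φ)
      have hCev : Cset ∈ Filter.map f Filter.atTop := by
        rw [Filter.mem_map]
        apply Filter.mem_of_superset (Filter.Ici_mem_atTop ({w} : Finset X))
        intro S hS
        have hwmem : w ∈ Submodule.span ℝ (S : Set X) := by
          apply Submodule.subset_span
          exact Finset.singleton_subset_iff.1 hS
        have hdiff : us S - w ∈ Submodule.span ℝ (S : Set X) :=
          Submodule.sub_mem _ (husmem S) hwmem
        have heq : F (us S) (us S - w) = b (us S - w) := husgal S _ hdiff
        have hm := hmono (us S) w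
        rw [ContinuousLinearMap.sub_apply] at hm
        have hineq : 0 ≤ φ (us S - w) := by
          rw [hφ, ContinuousLinearMap.sub_apply]
          linarith [heq ▸ hm]
        have : φ w ≤ φ (us S) := by
          rw [map_sub] at hineq
          linarith
        exact this
      have hxC : x'' ∈ Cset := by
        have h1 : ClusterPt x'' (Filter.principal Cset) :=
          hcl.mono (Filter.le_principal_iff.2 hCev)
        have h2 : x'' ∈ closure Cset := mem_closure_iff_clusterPt.2 h1
        rwa [hCc.closure_eq] at h2
      have h3 : φ w ≤ x'' φ := hxC
      have h4 : x'' φ = φ u0 := by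
        have : WeakDual.toStrongDual x'' φ = φ u0 := by
          rw [← hu0]
          exact NormedSpace.dual_def ℝ X u0 φ
        exact this
      rw [h4] at h3
      rw [map_sub]
      linarith
    -- Minty's trick
    refine ⟨u0, ?_⟩
    have hvals : ∀ z : X, F u0 z = b z := by
      intro z
      have hψ : Continuous (fun t : ℝ => F (u0 + t • z) z) := hhemi u0 z z
      have hψ0 : F (u0 + (0:ℝ) • z) z = F u0 z := by simp
      have hkey2 : ∀ t : ℝ, 0 < t → b z ≤ F (u0 + t • z) z := by
        intro t ht
        have h1 := hkey (u0 + t • z)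
        have h2 : u0 - (u0 + t • z) = -(t • z) := by abel
        rw [h2, map_neg, map_smul] at h1
        rw [ContinuousLinearMap.sub_apply] at h1
        have h3 : 0 ≤ -(t * (b z - F (u0 + t • z) z)) := by
          simpa using h1
        nlinarith
      have hkey3 : ∀ t : ℝ, t < 0 → F (u0 + t • z) z ≤ b z := by
        intro t ht
        have h1 := hkey (u0 + t • z)
        have h2 : u0 - (u0 + t • z) = -(t • z) := by abel
        rw [h2, map_neg, map_smul] at h1
        rw [ContinuousLinearMap.sub_apply] at h1
        have h3 : 0 ≤ -(t * (b z - F (u0 + t • z) z)) := by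
          simpa using h1
        nlinarith
      have hge : b z ≤ F u0 z := by
        have htend : Tendsto (fun t : ℝ => F (u0 + t • z) z) (nhdsWithin 0 (Set.Ioi 0))
            (nhds (F u0 z)) := by
          rw [← hψ0]
          exact (hψ.tendsto 0).mono_left nhdsWithin_le_nhds
        apply ge_of_tendsto htend
        filter_upwards [self_mem_nhdsWithin] with t ht
        exact hkey2 t ht
      have hle' : F u0 z ≤ b z := by
        have htend : Tendsto (fun t : ℝ => F (u0 + t • z) z) (nhdsWithin 0 (Set.Iio 0))
            (nhds (F u0 z)) := by
          rw [← hψ0]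
          exact (hψ.tendsto 0).mono_left nhdsWithin_le_nhds
        apply le_of_tendsto htend
        filter_upwards [self_mem_nhdsWithin] with t ht
        exact hkey3 t ht
      linarith
    exact ContinuousLinearMap.ext hvals
  refine ⟨hsurj, ?_⟩
  intro hstrict
  refine ⟨?_, hsurj⟩
  intro a c hac
  by_contra hne
  have := hstrict a c hne
  rw [hac] at this
  simp at this

end BM

/-- Browder–Minty: a monotone, hemicontinuous, coercive operator from a
real reflexive Banach space to its dual is surjective; if moreover it is strictly
monotone, it is bijective. -/
theorem browder_minty
    {X : Type*} [NormedAddCommGroup X] [NormedSpace ℝ X] [CompleteSpace X]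
    (hrefl : Function.Surjective (NormedSpace.inclusionInDoubleDual ℝ X))
    (F : X → StrongDual ℝ X)
    (hmono : ∀ u v : X, 0 ≤ (F u - F v) (u - v))
    (hhemi : ∀ u v w : X, Continuous fun t : ℝ => F (u + t • v) w)
    (hcoer : Filter.Tendsto (fun v : X => F v v / ‖v‖)
      (Filter.comap norm Filter.atTop) Filter.atTop) :
    Function.Surjective F ∧
      ((∀ u v : X, u ≠ v → 0 < (F u - F v) (u - v)) → Function.Bijective F) := by
  exact BM.browder_minty' hrefl F hmono hhemi hcoer
end

section
/- Let X and Y be real reflexive Banach spaces and let j : X → Y be an injective continuous linear map. Let T > 0 and let u : [0,T] → X be such that: (i) there exists M ≥ 0 with ‖u(t)‖_X ≤ M for almost every t ∈ [0,T]; (ii) t ↦ j(u(t)) is weakly continuous from [0,T] to Y, i.e. for every continuous linear functional y' on Y the map t ↦ y'(j(u(t))) is continuous on [0,T]. Then u is weakly continuous from [0,T] to X: for every continuous linear functional x' on X the map t ↦ x'(u(t)) is continuous on [0,T]; moreover ‖u(t)‖_X ≤ M for every t ∈ [0,T]. -/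
open MeasureTheory

open MeasureTheory Filter Topology NormedSpace

section Aux

variable {X Y : Type*} [NormedAddCommGroup X] [NormedSpace ℝ X]
  [NormedAddCommGroup Y] [NormedSpace ℝ Y]

lemma aux_clusterPt_eq {α Z : Type*} [TopologicalSpace Z] [T2Space Z] {F : Filter α} [F.NeBot]
    {f : α → Z} {c a : Z} (hc : MapClusterPt c F f) (ha : Filter.Tendsto f F (𝓝 a)) : c = a :=
  eq_of_nhds_neBot (hc.clusterPt.mono ha)

set_option maxHeartbeats 1000000 in
lemma aux_key (hreflX : Function.Surjective (NormedSpace.inclusionInDoubleDual ℝ X))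
    (j : X →L[ℝ] Y) (hj : Function.Injective j)
    {α : Type*} {F : Filter α} [F.NeBot] {u : α → X} {M : ℝ}
    (h1 : ∀ᶠ s in F, ‖u s‖ ≤ M) {x0 : X}
    (h2 : ∀ y' : StrongDual ℝ Y, Tendsto (fun s => y' (j (u s))) F (𝓝 (y' (j x0)))) :
    ‖x0‖ ≤ M ∧ ∀ x' : StrongDual ℝ X, MapClusterPt (x' x0) F (fun s => x' (u s)) := by
  classical
  set v : α → WeakDual ℝ (StrongDual ℝ X) :=
    fun s => StrongDual.toWeakDual (inclusionInDoubleDual ℝ X (u s)) with hv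
  have hle : map v F ≤ Filter.principal (WeakDual.toStrongDual ⁻¹' Metric.closedBall 0 M) := by
    rw [le_principal_iff, mem_map]
    filter_upwards [h1] with s hs
    simp only [Set.mem_preimage, Metric.mem_closedBall, dist_zero_right, hv]
    have hdd := NormedSpace.double_dual_bound ℝ X (u s)
    rw [← dist_zero_right (inclusionInDoubleDual ℝ X (u s))] at hdd
    exact le_trans hdd hs
  haveI : (map v F).NeBot := Filter.map_neBot
  obtain ⟨φ, hφmem, hφ⟩ :=
    (WeakDual.isCompact_closedBall (0 : StrongDual ℝ (StrongDual ℝ X)) M).exists_clusterPt hle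
  obtain ⟨x, hx⟩ := hreflX (WeakDual.toStrongDual φ)
  have hxM : ‖x‖ ≤ M := by
    have h1 : ‖x‖ = ‖inclusionInDoubleDual ℝ X x‖ :=
      ((inclusionInDoubleDualLi ℝ).norm_map x).symm
    rw [h1, hx]
    simpa [dist_zero_right] using hφmem
  have hcp : ∀ x' : StrongDual ℝ X, MapClusterPt (x' x) F (fun s => x' (u s)) := by
    intro x'
    have hev : ContinuousAt (fun ψ : WeakDual ℝ (StrongDual ℝ X) => ψ x') φ :=
      (WeakDual.eval_continuous x').continuousAt
    have h3 : MapClusterPt (φ x') F ((fun ψ : WeakDual ℝ (StrongDual ℝ X) => ψ x') ∘ v) :=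
      MapClusterPt.continuousAt_comp hev hφ
    have heq : x' x = φ x' := by
      calc x' x = inclusionInDoubleDual ℝ X x x' := rfl
        _ = WeakDual.toStrongDual φ x' := by rw [hx]
        _ = φ x' := rfl
    have hfun : ((fun ψ : WeakDual ℝ (StrongDual ℝ X) => ψ x') ∘ v) = fun s => x' (u s) := by
      funext s
      simp only [hv, Function.comp_apply]
      rfl
    rw [hfun] at h3
    rwa [heq]
  have hjx : ∀ y' : StrongDual ℝ Y, y' (j x) = y' (j x0) := by
    intro y'
    have hcomp := hcp (y'.comp j)
    simp only [ContinuousLinearMap.comp_apply] at hcomp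
    exact aux_clusterPt_eq hcomp (h2 y')
  have hxx0 : x = x0 := hj ((NormedSpace.eq_iff_forall_dual_eq ℝ).mpr hjx)
  rw [hxx0] at hxM hcp
  exact ⟨hxM, hcp⟩

lemma aux_key_tendsto (hreflX : Function.Surjective (NormedSpace.inclusionInDoubleDual ℝ X))
    (j : X →L[ℝ] Y) (hj : Function.Injective j)
    {α : Type*} {F : Filter α} [F.NeBot] {u : α → X} {M : ℝ}
    (h1 : ∀ᶠ s in F, ‖u s‖ ≤ M) {x0 : X}
    (h2 : ∀ y' : StrongDual ℝ Y, Tendsto (fun s => y' (j (u s))) F (𝓝 (y' (j x0)))) :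
    ∀ x' : StrongDual ℝ X, Tendsto (fun s => x' (u s)) F (𝓝 (x' x0)) := by
  intro x'
  by_contra hcon
  rw [Metric.tendsto_nhds] at hcon
  push_neg at hcon
  obtain ⟨ε, hε, hfreq⟩ := hcon
  simp only [← not_lt] at hfreq
  haveI hne : (F ⊓ Filter.principal {s | ¬ dist (x' (u s)) (x' x0) < ε}).NeBot :=
    Filter.frequently_iff_neBot.mp hfreq
  have h1' : ∀ᶠ s in F ⊓ Filter.principal {s | ¬ dist (x' (u s)) (x' x0) < ε}, ‖u s‖ ≤ M :=
    h1.filter_mono inf_le_left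
  have h2' : ∀ y' : StrongDual ℝ Y,
      Tendsto (fun s => y' (j (u s)))
        (F ⊓ Filter.principal {s | ¬ dist (x' (u s)) (x' x0) < ε}) (𝓝 (y' (j x0))) :=
    fun y' => (h2 y').mono_left inf_le_left
  have hK := (aux_key hreflX j hj h1' h2').2 x'
  have hev : ∀ᶠ s in F ⊓ Filter.principal {s | ¬ dist (x' (u s)) (x' x0) < ε},
      ¬ dist (x' (u s)) (x' x0) < ε :=
    eventually_inf_principal.mpr (Eventually.of_forall fun s h => h)
  have hfr := (mapClusterPt_iff_frequently.mp hK) (Metric.ball (x' x0) ε) (Metric.ball_mem_nhds _ hε)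
  obtain ⟨s, hs1, hs2⟩ := (hfr.and_eventually hev).exists
  exact hs2 (by simpa [Metric.mem_ball] using hs1)

lemma aux_dense {T : ℝ} (hT : 0 < T) {good : Set ℝ}
    (h0 : (volume.restrict (Set.Icc (0:ℝ) T)) {s | s ∉ good} = 0)
    {t : ℝ} (ht : t ∈ Set.Icc (0:ℝ) T) :
    (𝓝[good ∩ Set.Icc (0:ℝ) T] t).NeBot := by
  rw [← mem_closure_iff_nhdsWithin_neBot, Metric.mem_closure_iff]
  intro ε hε
  set a := max 0 (t - ε/2) with ha
  set b := min T (t + ε/2) with hb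
  obtain ⟨ht0, htT⟩ := ht
  have hab : a < b := by
    rw [ha, hb, max_lt_iff, lt_min_iff, lt_min_iff]
    constructor <;> constructor <;> linarith
  have hsub : Set.Icc a b ⊆ Set.Icc (0:ℝ) T :=
    Set.Icc_subset_Icc (le_max_left _ _) (min_le_left _ _)
  have hrest : (volume.restrict (Set.Icc (0:ℝ) T)) {s | s ∉ good}
      = volume ({s | s ∉ good} ∩ Set.Icc (0:ℝ) T) :=
    Measure.restrict_apply' measurableSet_Icc
  have hbad : volume (Set.Icc a b ∩ {s | s ∉ good}) = 0 := by
    refine measure_mono_null ?_ (hrest ▸ h0)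
    intro s hs; exact ⟨hs.2, hsub hs.1⟩
  have hpos : volume (Set.Icc a b ∩ good) ≠ 0 := by
    intro h
    have hcover : Set.Icc a b ⊆ (Set.Icc a b ∩ good) ∪ (Set.Icc a b ∩ {s | s ∉ good}) := by
      intro s hs; by_cases hg : s ∈ good
      · exact Or.inl ⟨hs, hg⟩
      · exact Or.inr ⟨hs, hg⟩
    have h0' : volume (Set.Icc a b) = 0 :=
      measure_mono_null hcover (measure_union_null h hbad)
    rw [Real.volume_Icc, ENNReal.ofReal_eq_zero] at h0'
    linarith
  obtain ⟨s, hs⟩ := nonempty_of_measure_ne_zero hpos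
  refine ⟨s, ⟨hs.2, hsub hs.1⟩, ?_⟩
  have h1 : t - ε/2 ≤ s := le_trans (le_max_right _ _) hs.1.1
  have h2 : s ≤ t + ε/2 := le_trans hs.1.2 (min_le_right _ _)
  rw [Real.dist_eq, abs_sub_lt_iff]
  constructor <;> linarith

end Aux


/-- If `u : [0,T] → X` is essentially bounded by `M` and weakly continuous
into a reflexive Banach space `Y` via an injective continuous linear map `j : X → Y`,
where `X` is reflexive, then `u` is weakly continuous into `X` and bounded by `M`
everywhere on `[0,T]`. -/
theorem weak_continuity_from_bounded_and_weakly_continuous_embedding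
    {X Y : Type*} [NormedAddCommGroup X] [NormedSpace ℝ X] [CompleteSpace X]
    [NormedAddCommGroup Y] [NormedSpace ℝ Y] [CompleteSpace Y]
    (hreflX : Function.Surjective (NormedSpace.inclusionInDoubleDual ℝ X))
    (hreflY : Function.Surjective (NormedSpace.inclusionInDoubleDual ℝ Y))
    (j : X →L[ℝ] Y) (hj : Function.Injective j)
    (T : ℝ) (hT : 0 < T) (u : ℝ → X) (M : ℝ) (hM : 0 ≤ M)
    (hbdd : ∀ᵐ t ∂(volume.restrict (Set.Icc (0 : ℝ) T)), ‖u t‖ ≤ M)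
    (hweak : ∀ y' : StrongDual ℝ Y,
      ContinuousOn (fun t => y' (j (u t))) (Set.Icc (0 : ℝ) T)) :
    (∀ x' : StrongDual ℝ X,
      ContinuousOn (fun t => x' (u t)) (Set.Icc (0 : ℝ) T)) ∧
    (∀ t ∈ Set.Icc (0 : ℝ) T, ‖u t‖ ≤ M) := by
  classical
  have h0 : (volume.restrict (Set.Icc (0:ℝ) T)) {s | s ∉ {s : ℝ | ‖u s‖ ≤ M}} = 0 := by
    have := MeasureTheory.ae_iff.mp hbdd
    simpa using this
  have hbd : ∀ t ∈ Set.Icc (0 : ℝ) T, ‖u t‖ ≤ M := by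
    intro t ht
    haveI := aux_dense hT h0 ht
    have h1 : ∀ᶠ s in nhdsWithin t ({s : ℝ | ‖u s‖ ≤ M} ∩ Set.Icc (0:ℝ) T), ‖u s‖ ≤ M := by
      filter_upwards [self_mem_nhdsWithin] with s hs using hs.1
    have h2 : ∀ y' : StrongDual ℝ Y,
        Filter.Tendsto (fun s => y' (j (u s)))
          (nhdsWithin t ({s : ℝ | ‖u s‖ ≤ M} ∩ Set.Icc (0:ℝ) T)) (nhds (y' (j (u t)))) :=
      fun y' => (hweak y' t ht).mono_left (nhdsWithin_mono t Set.inter_subset_right)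
    exact (aux_key hreflX j hj h1 h2).1
  refine ⟨?_, hbd⟩
  intro x' t ht
  haveI : (nhdsWithin t (Set.Icc (0:ℝ) T)).NeBot :=
    mem_closure_iff_nhdsWithin_neBot.mp (subset_closure ht)
  have h1 : ∀ᶠ s in nhdsWithin t (Set.Icc (0:ℝ) T), ‖u s‖ ≤ M := by
    filter_upwards [self_mem_nhdsWithin] with s hs using hbd s hs
  exact aux_key_tendsto hreflX j hj h1 (fun y' => hweak y' t ht) x'
end

section
/- Let H be a real Hilbert space, T > 0, and let u : ℝ → H be twice continuously differentiable on [0,T] with u(0) = 0 and u'(0) = 0. Assume that ∫₀^s ⟪u''(t), u(t) + u'(t)⟫ dt ≤ 0 for every s ∈ [0,T]. Then u(t) = 0 for every t ∈ [0,T]. (This is the analytic core of the uniqueness theorem for the nonlinear viscoelastic system: the difference u = u₁ − u₂ of two solutions satisfies this integral inequality because the monotonicity of G makes the stress-difference term nonnegative.) -/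
open scoped RealInnerProductSpace
open intervalIntegral Set

/-- Analytic core of the uniqueness theorem.  If `u : [0,T] → H` is twice
continuously differentiable with `u(0) = 0`, `u'(0) = 0`, and
`∫₀ˢ ⟪u''(t), u(t) + u'(t)⟫ dt ≤ 0` for every `s ∈ [0,T]`, then `u ≡ 0` on `[0,T]`. -/
theorem uniqueness_core
    {H : Type*} [NormedAddCommGroup H] [InnerProductSpace ℝ H] [CompleteSpace H]
    (T : ℝ) (hT : 0 < T) (u u' u'' : ℝ → H)
    (hu : ∀ t ∈ Set.Icc (0 : ℝ) T, HasDerivWithinAt u (u' t) (Set.Icc (0 : ℝ) T) t)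
    (hu' : ∀ t ∈ Set.Icc (0 : ℝ) T, HasDerivWithinAt u' (u'' t) (Set.Icc (0 : ℝ) T) t)
    (hu'' : ContinuousOn u'' (Set.Icc (0 : ℝ) T))
    (h0 : u 0 = 0) (h1 : u' 0 = 0)
    (hint : ∀ s ∈ Set.Icc (0 : ℝ) T, (∫ t in (0 : ℝ)..s, ⟪u'' t, u t + u' t⟫) ≤ 0) :
    ∀ t ∈ Set.Icc (0 : ℝ) T, u t = 0 := by
  set I := Set.Icc (0 : ℝ) T with hI
  have hcu : ContinuousOn u I := fun t ht => (hu t ht).continuousWithinAt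
  have hcu' : ContinuousOn u' I := fun t ht => (hu' t ht).continuousWithinAt
  -- continuity of scalar functions
  have hg : ContinuousOn (fun t => ⟪u' t, u' t⟫) I := hcu'.inner hcu'
  have hw : ContinuousOn (fun t => ⟪u'' t, u t + u' t⟫) I := hu''.inner (hcu.add hcu')
  -- the auxiliary function F and its derivative
  set F : ℝ → ℝ := fun t => 2 * ⟪u' t, u t⟫ + ⟪u' t, u' t⟫ with hF
  have hFderiv : ∀ t ∈ I, HasDerivWithinAt F
      (2 * ⟪u'' t, u t + u' t⟫ + 2 * ⟪u' t, u' t⟫) I t := by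
    intro t ht
    have hA := ((hu' t ht).inner ℝ (hu t ht)).const_mul (2 : ℝ)
    have hB := (hu' t ht).inner ℝ (hu' t ht)
    have := hA.add hB
    refine HasDerivWithinAt.congr_deriv this ?_
    simp [inner_add_right, real_inner_comm (u' t) (u t), real_inner_comm (u'' t) (u' t)]
    ring
  -- FTC identity
  have hFTC : ∀ s ∈ I, F s = (∫ t in (0:ℝ)..s, 2 * ⟪u'' t, u t + u' t⟫ + 2 * ⟪u' t, u' t⟫) := by
    intro s hs
    have hs0 : (0:ℝ) ≤ s := hs.1
    have hsub : Set.Icc (0:ℝ) s ⊆ I := Set.Icc_subset_Icc le_rfl hs.2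
    have hcont : ContinuousOn F (Set.Icc 0 s) :=
      (((hcu'.inner hcu).const_smul (2:ℝ)).add hg).mono hsub
    have hderiv : ∀ x ∈ Set.Ioo (0:ℝ) s, HasDerivWithinAt F
        (2 * ⟪u'' x, u x + u' x⟫ + 2 * ⟪u' x, u' x⟫) (Set.Ioi x) x := by
      intro x hx
      have hxI : x ∈ I := hsub (Set.Ioo_subset_Icc_self hx)
      have hnhds : I ∈ nhds x := by
        refine mem_nhds_iff.mpr ⟨Set.Ioo 0 T, fun y hy => ⟨le_of_lt hy.1, le_of_lt hy.2⟩,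
          isOpen_Ioo, ⟨hx.1, lt_of_lt_of_le hx.2 hs.2⟩⟩
      exact (((hFderiv x hxI).hasDerivAt hnhds).hasDerivWithinAt)
    have hintg : IntervalIntegrable
        (fun t => 2 * ⟪u'' t, u t + u' t⟫ + 2 * ⟪u' t, u' t⟫) MeasureTheory.volume 0 s := by
      apply ContinuousOn.intervalIntegrable
      rw [Set.uIcc_of_le hs0]
      exact (((hw.const_smul (2:ℝ)).add (hg.const_smul (2:ℝ))).mono hsub)
    have := intervalIntegral.integral_eq_sub_of_hasDeriv_right_of_le hs0 hcont hderiv hintg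
    rw [this]
    simp [hF, h0, h1]
  -- G and φ
  set G : ℝ → ℝ := fun s => ∫ t in (0:ℝ)..s, ⟪u' t, u' t⟫ with hG
  have hgint : ∀ s ∈ I, IntervalIntegrable (fun t => ⟪u' t, u' t⟫) MeasureTheory.volume 0 s := by
    intro s hs
    apply ContinuousOn.intervalIntegrable
    rw [Set.uIcc_of_le hs.1]
    exact hg.mono (Set.Icc_subset_Icc le_rfl hs.2)
  have hGderiv : ∀ s ∈ I, HasDerivWithinAt G ⟪u' s, u' s⟫ I s := by
    intro s hs
    haveI : Fact (s ∈ Set.Icc (0:ℝ) T) := ⟨hs⟩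
    exact intervalIntegral.integral_hasDerivWithinAt_right (hgint s hs)
      ⟨I, self_mem_nhdsWithin, (hg.mono (by simp)).aestronglyMeasurable measurableSet_Icc⟩
      (hg s hs)
  -- key inequality : F s ≤ 2 * G s
  have hkey : ∀ s ∈ I, F s ≤ 2 * G s := by
    intro s hs
    rw [hFTC s hs]
    have hwint : IntervalIntegrable (fun t => ⟪u'' t, u t + u' t⟫) MeasureTheory.volume 0 s := by
      apply ContinuousOn.intervalIntegrable
      rw [Set.uIcc_of_le hs.1]
      exact hw.mono (Set.Icc_subset_Icc le_rfl hs.2)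
    rw [intervalIntegral.integral_add (hwint.const_mul 2) ((hgint s hs).const_mul 2),
      intervalIntegral.integral_const_mul, intervalIntegral.integral_const_mul]
    have := hint s hs
    nlinarith
  -- φ = ⟪u,u⟫ + G
  set φ : ℝ → ℝ := fun s => ⟪u s, u s⟫ + G s with hφ
  have hφderiv : ∀ s ∈ I, HasDerivWithinAt φ (F s) I s := by
    intro s hs
    have := ((hu s hs).inner ℝ (hu s hs)).add (hGderiv s hs)
    refine HasDerivWithinAt.congr_deriv this ?_
    simp [hF, real_inner_comm (u' s) (u s)]
    ring
  have hφcont : ContinuousOn φ I := fun s hs => (hφderiv s hs).continuousWithinAt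
  -- χ = exp (-2 s) * φ s is antitone on I
  set χ : ℝ → ℝ := fun s => Real.exp (-2 * s) * φ s with hχ
  have hχderiv : ∀ s ∈ I, HasDerivWithinAt χ
      (Real.exp (-2 * s) * (F s - 2 * φ s)) I s := by
    intro s hs
    have he : HasDerivWithinAt (fun s : ℝ => Real.exp (-2 * s))
        (Real.exp (-2 * s) * (-2)) I s := by
      have h := (((hasDerivAt_id s).const_mul (-2:ℝ)).exp).hasDerivWithinAt (s := I)
      simpa using h
    have := he.mul (hφderiv s hs)
    refine HasDerivWithinAt.congr_deriv this ?_
    ring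
  have hanti : AntitoneOn χ I := by
    apply antitoneOn_of_deriv_nonpos (convex_Icc 0 T)
    · exact (Real.continuous_exp.comp (continuous_const.mul continuous_id)).continuousOn.mul hφcont
    · intro x hx
      rw [interior_Icc] at hx
      have hxI : x ∈ I := Set.Ioo_subset_Icc_self hx
      have hnhds : I ∈ nhds x := by
        refine mem_nhds_iff.mpr ⟨Set.Ioo 0 T, fun y hy => ⟨le_of_lt hy.1, le_of_lt hy.2⟩,
          isOpen_Ioo, hx⟩
      exact ((hχderiv x hxI).hasDerivAt hnhds).differentiableAt.differentiableWithinAt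
    · intro x hx
      rw [interior_Icc] at hx
      have hxI : x ∈ I := Set.Ioo_subset_Icc_self hx
      have hnhds : I ∈ nhds x := by
        refine mem_nhds_iff.mpr ⟨Set.Ioo 0 T, fun y hy => ⟨le_of_lt hy.1, le_of_lt hy.2⟩,
          isOpen_Ioo, hx⟩
      rw [((hχderiv x hxI).hasDerivAt hnhds).deriv]
      have h1 : F x ≤ 2 * G x := hkey x hxI
      have h2 : (0:ℝ) ≤ ⟪u x, u x⟫ := real_inner_self_nonneg
      have h3 : F x - 2 * φ x ≤ 0 := by simp only [hφ]; nlinarith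
      exact mul_nonpos_of_nonneg_of_nonpos (Real.exp_pos _).le h3
  -- conclude
  intro t ht
  have h0I : (0:ℝ) ∈ I := ⟨le_rfl, hT.le⟩
  have hχ0 : χ 0 = 0 := by simp [hχ, hφ, hG, h0]
  have hle : χ t ≤ 0 := hχ0 ▸ hanti h0I ht ht.1
  have hφle : φ t ≤ 0 := by
    have hle' : Real.exp (-2 * t) * φ t ≤ 0 := hle
    have hp := Real.exp_pos (-2 * t)
    exact le_of_not_gt fun h => absurd hle' (not_le.mpr (mul_pos hp h))
  have hGnn : 0 ≤ G t := by
    apply intervalIntegral.integral_nonneg ht.1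
    intro x _
    exact real_inner_self_nonneg
  have : ⟪u t, u t⟫ ≤ 0 := by simp only [hφ] at hφle; linarith
  exact real_inner_self_nonpos.mp this
end
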